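/- arXiv:2304.14726 — 4 statements merged into one kernel-verified Lean document; each statement's English description precedes it below -/
import Mathlib

section
/- Under hypotheses (E1)–(E4), the translates of v_φ^μ are equi-integrable uniformly in φ: for every fixed μ ∈ (0, a_m] and every ε > 0 there exists η > 0 such that for all h ∈ (0, η) and all φ ∈ L¹(J,E₀), ∫₀^{a_m} ‖ṽ_φ^μ(a+h) − ṽ_φ^μ(a)‖_{E₀} da ≤ ε ‖φ‖_{L¹(J,E₀)}, where ṽ_φ^μ denotes the extension of v_φ^μ to [0,∞) by zero outside J. -/
open MeasureTheory Set Filter Topology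

set_option maxHeartbeats 1000000

/-- Under (E1)–(E4), the translates of `v_φ^μ` are equi-integrable
uniformly in `φ`: for every fixed `μ ∈ (0, a_m]` and every `ε > 0` there exists `η > 0`
such that for all `h ∈ (0, η)` and all `φ ∈ L¹(J,E₀)`,
`∫₀^{a_m} ‖ṽ_φ^μ(a+h) − ṽ_φ^μ(a)‖ da ≤ ε ‖φ‖_{L¹(J,E₀)}`,
where `ṽ_φ^μ` is the extension of `v_φ^μ` by zero outside `J`. -/
theorem regularized_volterra_equiintegrable
    {E₀ Eϑ : Type*} [NormedAddCommGroup E₀] [NormedSpace ℝ E₀]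
    [NormedAddCommGroup Eϑ] [NormedSpace ℝ Eϑ]
    (ι : Eϑ →L[ℝ] E₀) (hι_inj : Function.Injective ι)
    (hι_cpt : IsCompactOperator (ι : Eϑ →L[ℝ] E₀))
    (a_m : ℝ) (ha_m : 0 < a_m)
    (ϑ : ℝ) (hϑ : ϑ ∈ Set.Ioo (0 : ℝ) 1)
    (M : ℝ) (hM : 1 ≤ M)
    (P : ℝ → ℝ → E₀ →L[ℝ] E₀) (Pθ : ℝ → ℝ → E₀ →L[ℝ] Eϑ)
    -- (E1)
    (hE1a : ∀ a, 0 ≤ a → a ≤ 2 * a_m → P a a = ContinuousLinearMap.id ℝ E₀)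
    (hE1b : ∀ σ ρ a, 0 ≤ σ → σ ≤ ρ → ρ ≤ a → a ≤ 2 * a_m →
      (P a ρ).comp (P ρ σ) = P a σ)
    -- (E2)
    (hE2 : ContinuousOn (fun p : ℝ × ℝ => P p.1 p.2)
      {p : ℝ × ℝ | 0 ≤ p.2 ∧ p.2 < p.1 ∧ p.1 ≤ 2 * a_m})
    -- (E3)
    (hE3 : ∀ σ a, 0 ≤ σ → σ < a → a ≤ 2 * a_m → ι.comp (Pθ a σ) = P a σ)
    -- (E4)
    (hE4a : ∀ σ a, 0 ≤ σ → σ ≤ a → a ≤ 2 * a_m → ‖P a σ‖ ≤ M)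
    (hE4b : ∀ σ a, 0 ≤ σ → σ < a → a ≤ 2 * a_m → (a - σ) ^ ϑ * ‖Pθ a σ‖ ≤ M)
    -- fixed μ ∈ (0, a_m]
    (μ : ℝ) (hμ : μ ∈ Set.Ioc (0 : ℝ) a_m) :
    ∀ ε > (0 : ℝ), ∃ η > (0 : ℝ), ∀ h : ℝ, 0 < h → h < η →
      ∀ φ : ℝ → E₀, IntegrableOn φ (Set.Icc (0 : ℝ) a_m) →
        (∫ a in Set.Icc (0 : ℝ) a_m,
          ‖(Set.Icc (0 : ℝ) a_m).indicator
              (fun a' => ∫ σ in (0 : ℝ)..a', P (μ + a') σ (φ σ)) (a + h) -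
            (Set.Icc (0 : ℝ) a_m).indicator
              (fun a' => ∫ σ in (0 : ℝ)..a', P (μ + a') σ (φ σ)) a‖) ≤
          ε * ∫ a in Set.Icc (0 : ℝ) a_m, ‖φ a‖ := by
  obtain ⟨hμ0, hμm⟩ := hμ
  have hϑ0 := hϑ.1
  have hM0 : (0:ℝ) < M := lt_of_lt_of_le one_pos hM
  intro ε hε
  -- The compact set away from the diagonal
  set K : Set (ℝ × ℝ) := {p : ℝ × ℝ | 0 ≤ p.2 ∧ p.2 + μ ≤ p.1 ∧ p.1 ≤ 2 * a_m} with hKdef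
  have hKS : K ⊆ {p : ℝ × ℝ | 0 ≤ p.2 ∧ p.2 < p.1 ∧ p.1 ≤ 2 * a_m} := by
    intro p hp
    exact ⟨hp.1, lt_of_lt_of_le (by linarith [hp.1, hp.2.1] : p.2 < p.2 + μ) hp.2.1, hp.2.2⟩
  have hKclosed : IsClosed K := by
    have h1 : IsClosed {p : ℝ × ℝ | 0 ≤ p.2} := isClosed_le continuous_const continuous_snd
    have h2 : IsClosed {p : ℝ × ℝ | p.2 + μ ≤ p.1} :=
      isClosed_le (continuous_snd.add continuous_const) continuous_fst
    have h3 : IsClosed {p : ℝ × ℝ | p.1 ≤ 2 * a_m} := isClosed_le continuous_fst continuous_const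
    exact h1.inter (h2.inter h3)
  have hKcpt : IsCompact K := by
    refine IsCompact.of_isClosed_subset (isCompact_Icc.prod isCompact_Icc :
      IsCompact ((Icc (0:ℝ) (2*a_m)) ×ˢ (Icc (0:ℝ) (2*a_m)))) hKclosed ?_
    intro p hp
    obtain ⟨h1, h2, h3⟩ := hp
    exact ⟨⟨by linarith, h3⟩, ⟨h1, by linarith⟩⟩
  have hUC : UniformContinuousOn (fun p : ℝ × ℝ => P p.1 p.2) K :=
    hKcpt.uniformContinuousOn_of_continuous (hE2.mono hKS)
  set ε₁ : ℝ := ε / (2 * (a_m + 1)) with hε₁def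
  have hε₁ : 0 < ε₁ := div_pos hε (by linarith)
  obtain ⟨η₁, hη₁0, hη₁⟩ := Metric.uniformContinuousOn_iff.mp hUC ε₁ hε₁
  refine ⟨min η₁ (ε / (4 * M)), lt_min hη₁0 (div_pos hε (by linarith)), ?_⟩
  intro h hh0 hhη φ hφ
  have hhη₁ : h < η₁ := lt_of_lt_of_le hhη (min_le_left _ _)
  have hhε : h < ε / (4 * M) := lt_of_lt_of_le hhη (min_le_right _ _)
  -- Basic objects
  set ψ : ℝ → ℝ := (Icc (0:ℝ) a_m).indicator (fun σ => ‖φ σ‖) with hψdef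
  have hψ0 : ∀ x, 0 ≤ ψ x := fun x => indicator_nonneg (fun y _ => norm_nonneg _) x
  have hψint : Integrable ψ := IntegrableOn.integrable_indicator (hφ.norm) measurableSet_Icc
  set I : ℝ := ∫ σ, ψ σ with hIdef
  have hIeq : I = ∫ a in Icc (0:ℝ) a_m, ‖φ a‖ := integral_indicator measurableSet_Icc
  have hI0 : 0 ≤ I := integral_nonneg hψ0
  set F : ℝ → ℝ := fun t => ∫ σ in Iic t, ψ σ with hFdef
  have hFmono : Monotone F := by
    intro s t hst
    exact setIntegral_mono_set hψint.integrableOn (ae_of_all _ hψ0)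
      (HasSubset.Subset.eventuallyLE (Iic_subset_Iic.2 hst))
  have hF0 : ∀ t, 0 ≤ F t := fun t => setIntegral_nonneg measurableSet_Iic (fun x _ => hψ0 x)
  have hFI : ∀ t, F t ≤ I := fun t => setIntegral_le_integral hψint (ae_of_all _ hψ0)
  have hFdiffeq : ∀ a b : ℝ, a ≤ b → F b - F a = ∫ σ in Ioc a b, ψ σ := by
    intro a b hab
    have : F b = F a + ∫ σ in Ioc a b, ψ σ := by
      rw [hFdef]
      simp only
      rw [← Iic_union_Ioc_eq_Iic hab,
        setIntegral_union (Iic_disjoint_Ioc le_rfl) measurableSet_Ioc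
          hψint.integrableOn hψint.integrableOn]
    linarith
  have hFmeas : Measurable F := hFmono.measurable
  -- interval integrability of bounded measurable functions
  have hIIbdd : ∀ G : ℝ → ℝ, Measurable G → (∀ x, |G x| ≤ I) → ∀ x y : ℝ,
      IntervalIntegrable G volume x y := by
    intro G hGm hGb x y
    constructor <;>
    · refine Integrable.mono' (integrableOn_const measure_Ioc_lt_top.ne :
          IntegrableOn (fun _ => I) _ _)
        hGm.aestronglyMeasurable.restrict (ae_of_all _ ?_)
      intro z
      simpa [Real.norm_eq_abs] using hGb z
  have hsub01 : ∀ b : ℝ, b ≤ a_m → Ioc (0:ℝ) b ⊆ Icc 0 a_m :=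
    fun b hb x hx => ⟨le_of_lt hx.1, le_trans hx.2 hb⟩
  -- integrability of the integrands
  have hIntOn : ∀ t b : ℝ, 0 ≤ b → b ≤ a_m → b < t → t ≤ 2 * a_m →
      IntegrableOn (fun σ => P t σ (φ σ)) (Ioc 0 b) := by
    intro t b hb0 hbm hbt ht
    have hcont : ContinuousOn (fun σ : ℝ => P t σ) (Ioc 0 b) := by
      have hc : ContinuousOn (fun σ : ℝ => ((t, σ) : ℝ × ℝ)) (Ioc 0 b) :=
        (Continuous.prodMk_right t).continuousOn
      refine (hE2.comp hc ?_)
      intro σ hσ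
      exact ⟨le_of_lt hσ.1, lt_of_le_of_lt hσ.2 hbt, ht⟩
    have hφb : IntegrableOn φ (Ioc 0 b) := hφ.mono_set (hsub01 b hbm)
    have hmeas : AEStronglyMeasurable (fun σ => P t σ (φ σ)) (volume.restrict (Ioc 0 b)) := by
      have h1 : AEStronglyMeasurable (fun σ : ℝ => P t σ) (volume.restrict (Ioc 0 b)) :=
        hcont.aestronglyMeasurable measurableSet_Ioc
      have h2 := hφb.aestronglyMeasurable
      exact (isBoundedBilinearMap_apply.continuous.comp_aestronglyMeasurable (h1.prodMk h2))
    refine Integrable.mono (hφb.norm.const_mul M) hmeas ?_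
    filter_upwards [ae_restrict_mem measurableSet_Ioc] with σ hσ
    have hb : ‖P t σ‖ ≤ M :=
      hE4a σ t (le_of_lt hσ.1) (le_of_lt (lt_of_le_of_lt hσ.2 hbt)) ht
    calc ‖P t σ (φ σ)‖ ≤ ‖P t σ‖ * ‖φ σ‖ := (P t σ).le_opNorm _
      _ ≤ M * ‖φ σ‖ := mul_le_mul_of_nonneg_right hb (norm_nonneg _)
      _ ≤ ‖M * ‖φ σ‖‖ := le_abs_self _
  -- the dominating function
  set g : ℝ → ℝ := fun a => (ε₁ * I + M * (F (a + h) - F a)) +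
      (M * I) * (Ioc (a_m - h) a_m).indicator (fun _ => (1:ℝ)) a with hgdef
  -- pointwise bound
  have hpt : ∀ a ∈ Icc (0:ℝ) a_m,
      ‖(Icc (0:ℝ) a_m).indicator
          (fun a' => ∫ σ in (0:ℝ)..a', P (μ + a') σ (φ σ)) (a + h) -
        (Icc (0:ℝ) a_m).indicator
          (fun a' => ∫ σ in (0:ℝ)..a', P (μ + a') σ (φ σ)) a‖ ≤ g a := by
    intro a ha
    have hind_nonneg : 0 ≤ (M * I) * (Ioc (a_m - h) a_m).indicator (fun _ => (1:ℝ)) a :=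
      mul_nonneg (mul_nonneg hM0.le hI0) (indicator_nonneg (fun _ _ => zero_le_one) a)
    by_cases hcase : a + h ≤ a_m
    · -- both points in J
      have hmem' : a + h ∈ Icc (0:ℝ) a_m := ⟨by linarith [ha.1], hcase⟩
      rw [indicator_of_mem hmem', indicator_of_mem ha]
      have h0a : (0:ℝ) ≤ a := ha.1
      have h0ah : (0:ℝ) ≤ a + h := hmem'.1
      rw [intervalIntegral.integral_of_le h0ah, intervalIntegral.integral_of_le h0a]
      have ht'2 : μ + (a + h) ≤ 2 * a_m := by linarith
      have ht2 : μ + a ≤ 2 * a_m := by linarith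
      have h1 : IntegrableOn (fun σ => P (μ + (a + h)) σ (φ σ)) (Ioc 0 (a + h)) :=
        hIntOn _ _ h0ah hcase (by linarith) ht'2
      have h2 : IntegrableOn (fun σ => P (μ + (a + h)) σ (φ σ)) (Ioc 0 a) :=
        h1.mono_set (Ioc_subset_Ioc_right (by linarith))
      have h3 : IntegrableOn (fun σ => P (μ + a) σ (φ σ)) (Ioc 0 a) :=
        hIntOn _ _ h0a ha.2 (by linarith) ht2
      have h4 : IntegrableOn (fun σ => P (μ + (a + h)) σ (φ σ)) (Ioc a (a + h)) :=
        h1.mono_set (Ioc_subset_Ioc_left h0a)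
      have hsplit : (∫ σ in Ioc (0:ℝ) (a + h), P (μ + (a + h)) σ (φ σ)) =
          (∫ σ in Ioc (0:ℝ) a, P (μ + (a + h)) σ (φ σ)) +
            ∫ σ in Ioc a (a + h), P (μ + (a + h)) σ (φ σ) := by
        rw [← setIntegral_union (Ioc_disjoint_Ioc_of_le le_rfl) measurableSet_Ioc h2 h4,
          Ioc_union_Ioc_eq_Ioc h0a (by linarith)]
      rw [hsplit]
      have bound1 : ‖(∫ σ in Ioc (0:ℝ) a, P (μ + (a + h)) σ (φ σ)) -
          ∫ σ in Ioc (0:ℝ) a, P (μ + a) σ (φ σ)‖ ≤ ε₁ * I := by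
        rw [← integral_sub h2 h3]
        calc ‖∫ σ in Ioc (0:ℝ) a, (P (μ + (a + h)) σ (φ σ) - P (μ + a) σ (φ σ))‖
            ≤ ∫ σ in Ioc (0:ℝ) a, ‖P (μ + (a + h)) σ (φ σ) - P (μ + a) σ (φ σ)‖ :=
              norm_integral_le_integral_norm _
          _ ≤ ∫ σ in Ioc (0:ℝ) a, ε₁ * ‖φ σ‖ := by
              refine setIntegral_mono_on (h2.sub h3).norm
                ((hφ.mono_set (hsub01 a ha.2)).norm.const_mul ε₁) measurableSet_Ioc ?_
              intro σ hσ
              have hσ0 : (0:ℝ) ≤ σ := le_of_lt hσ.1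
              have hKp : ((μ + (a + h), σ) : ℝ × ℝ) ∈ K :=
                ⟨hσ0, by simpa using by linarith [hσ.2] , ht'2⟩
              have hKq : ((μ + a, σ) : ℝ × ℝ) ∈ K :=
                ⟨hσ0, by simpa using by linarith [hσ.2], ht2⟩
              have hdist : dist ((μ + (a + h), σ) : ℝ × ℝ) ((μ + a, σ) : ℝ × ℝ) < η₁ := by
                rw [Prod.dist_eq]
                simp only [dist_self]
                rw [max_eq_left dist_nonneg, Real.dist_eq]
                rw [show μ + (a + h) - (μ + a) = h by ring, abs_of_pos hh0]
                exact hhη₁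
              have hPd : ‖P (μ + (a + h)) σ - P (μ + a) σ‖ ≤ ε₁ := by
                have := hη₁ _ hKp _ hKq hdist
                rw [dist_eq_norm] at this
                exact le_of_lt this
              calc ‖P (μ + (a + h)) σ (φ σ) - P (μ + a) σ (φ σ)‖
                  = ‖(P (μ + (a + h)) σ - P (μ + a) σ) (φ σ)‖ := by
                    simp [ContinuousLinearMap.sub_apply]
                _ ≤ ‖P (μ + (a + h)) σ - P (μ + a) σ‖ * ‖φ σ‖ :=
                    ContinuousLinearMap.le_opNorm _ _
                _ ≤ ε₁ * ‖φ σ‖ := mul_le_mul_of_nonneg_right hPd (norm_nonneg _)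
          _ = ε₁ * ∫ σ in Ioc (0:ℝ) a, ‖φ σ‖ := integral_const_mul _ _
          _ ≤ ε₁ * I := by
              rw [hIeq]
              refine mul_le_mul_of_nonneg_left ?_ hε₁.le
              exact setIntegral_mono_set hφ.norm (ae_of_all _ fun x => norm_nonneg _)
                (HasSubset.Subset.eventuallyLE (hsub01 a ha.2))
      have bound2 : ‖∫ σ in Ioc a (a + h), P (μ + (a + h)) σ (φ σ)‖ ≤
          M * (F (a + h) - F a) := by
        rw [hFdiffeq a (a + h) (by linarith)]
        calc ‖∫ σ in Ioc a (a + h), P (μ + (a + h)) σ (φ σ)‖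
            ≤ ∫ σ in Ioc a (a + h), ‖P (μ + (a + h)) σ (φ σ)‖ :=
              norm_integral_le_integral_norm _
          _ ≤ ∫ σ in Ioc a (a + h), M * ψ σ := by
              refine setIntegral_mono_on h4.norm ((hψint.const_mul M).integrableOn)
                measurableSet_Ioc ?_
              intro σ hσ
              have hσmem : σ ∈ Icc (0:ℝ) a_m := ⟨by linarith [hσ.1, h0a], by linarith [hσ.2]⟩
              have hψσ : ψ σ = ‖φ σ‖ := indicator_of_mem hσmem _
              rw [hψσ]
              have hb : ‖P (μ + (a + h)) σ‖ ≤ M :=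
                hE4a σ _ hσmem.1 (by linarith [hσ.2]) ht'2
              calc ‖P (μ + (a + h)) σ (φ σ)‖ ≤ ‖P (μ + (a + h)) σ‖ * ‖φ σ‖ :=
                    ContinuousLinearMap.le_opNorm _ _
                _ ≤ M * ‖φ σ‖ := mul_le_mul_of_nonneg_right hb (norm_nonneg _)
          _ = M * ∫ σ in Ioc a (a + h), ψ σ := integral_const_mul _ _
      calc ‖((∫ σ in Ioc (0:ℝ) a, P (μ + (a + h)) σ (φ σ)) +
              ∫ σ in Ioc a (a + h), P (μ + (a + h)) σ (φ σ)) -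
            ∫ σ in Ioc (0:ℝ) a, P (μ + a) σ (φ σ)‖
          = ‖((∫ σ in Ioc (0:ℝ) a, P (μ + (a + h)) σ (φ σ)) -
              ∫ σ in Ioc (0:ℝ) a, P (μ + a) σ (φ σ)) +
              ∫ σ in Ioc a (a + h), P (μ + (a + h)) σ (φ σ)‖ := by
            rw [add_sub_right_comm]
        _ ≤ ‖(∫ σ in Ioc (0:ℝ) a, P (μ + (a + h)) σ (φ σ)) -
              ∫ σ in Ioc (0:ℝ) a, P (μ + a) σ (φ σ)‖ +
            ‖∫ σ in Ioc a (a + h), P (μ + (a + h)) σ (φ σ)‖ := norm_add_le _ _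
        _ ≤ ε₁ * I + M * (F (a + h) - F a) := add_le_add bound1 bound2
        _ ≤ g a := le_add_of_nonneg_right hind_nonneg
    · -- a + h is outside J
      push_neg at hcase
      have hnot : a + h ∉ Icc (0:ℝ) a_m := fun hmem => absurd hmem.2 (not_le.2 hcase)
      rw [indicator_of_notMem hnot, indicator_of_mem ha, zero_sub, norm_neg]
      rw [intervalIntegral.integral_of_le ha.1]
      have h3 : IntegrableOn (fun σ => P (μ + a) σ (φ σ)) (Ioc 0 a) :=
        hIntOn _ _ ha.1 ha.2 (by linarith) (by linarith [ha.2])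
      have hva : ‖∫ σ in Ioc (0:ℝ) a, P (μ + a) σ (φ σ)‖ ≤ M * I := by
        calc ‖∫ σ in Ioc (0:ℝ) a, P (μ + a) σ (φ σ)‖
            ≤ ∫ σ in Ioc (0:ℝ) a, ‖P (μ + a) σ (φ σ)‖ := norm_integral_le_integral_norm _
          _ ≤ ∫ σ in Ioc (0:ℝ) a, M * ψ σ := by
              refine setIntegral_mono_on h3.norm ((hψint.const_mul M).integrableOn)
                measurableSet_Ioc ?_
              intro σ hσ
              have hσmem : σ ∈ Icc (0:ℝ) a_m := hsub01 a ha.2 hσ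
              have hψσ : ψ σ = ‖φ σ‖ := indicator_of_mem hσmem _
              rw [hψσ]
              have hb : ‖P (μ + a) σ‖ ≤ M :=
                hE4a σ _ hσmem.1 (by linarith [hσ.2]) (by linarith [ha.2])
              calc ‖P (μ + a) σ (φ σ)‖ ≤ ‖P (μ + a) σ‖ * ‖φ σ‖ :=
                    ContinuousLinearMap.le_opNorm _ _
                _ ≤ M * ‖φ σ‖ := mul_le_mul_of_nonneg_right hb (norm_nonneg _)
          _ = M * ∫ σ in Ioc (0:ℝ) a, ψ σ := integral_const_mul _ _
          _ ≤ M * I := by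
              refine mul_le_mul_of_nonneg_left ?_ hM0.le
              exact setIntegral_le_integral hψint (ae_of_all _ hψ0)
      have hindmem : (Ioc (a_m - h) a_m).indicator (fun _ => (1:ℝ)) a = 1 :=
        indicator_of_mem (show a ∈ Ioc (a_m - h) a_m from ⟨by linarith, ha.2⟩) _
      have hFterm : 0 ≤ M * (F (a + h) - F a) :=
        mul_nonneg hM0.le (sub_nonneg.2 (hFmono (by linarith)))
      calc ‖∫ σ in Ioc (0:ℝ) a, P (μ + a) σ (φ σ)‖ ≤ M * I := hva
        _ ≤ g a := by
            rw [hgdef]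
            simp only [hindmem, mul_one]
            nlinarith [mul_nonneg hε₁.le hI0]
  -- integrability of g on Icc
  have hGmeas : Measurable fun a => ε₁ * I + M * (F (a + h) - F a) :=
    measurable_const.add (((hFmeas.comp (measurable_add_const h)).sub hFmeas).const_mul M)
  have hGint : IntegrableOn (fun a => ε₁ * I + M * (F (a + h) - F a)) (Icc (0:ℝ) a_m) := by
    refine Integrable.mono' (integrableOn_const measure_Icc_lt_top.ne :
      IntegrableOn (fun _ => ε₁ * I + M * I) _ _)
      hGmeas.aestronglyMeasurable.restrict (ae_of_all _ ?_)
    intro a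
    have h1 : 0 ≤ F (a + h) - F a := sub_nonneg.2 (hFmono (by linarith))
    have h2 : F (a + h) - F a ≤ I := by
      have := hFI (a + h); have := hF0 a; linarith
    rw [Real.norm_eq_abs, abs_of_nonneg (by nlinarith [mul_nonneg hε₁.le hI0])]
    nlinarith
  have hindint : Integrable (fun a => (M * I) * (Ioc (a_m - h) a_m).indicator
      (fun _ => (1:ℝ)) a) := by
    refine Integrable.const_mul ?_ (M * I)
    exact (integrable_indicator_iff measurableSet_Ioc).2
      (integrableOn_const measure_Ioc_lt_top.ne)
  have hg_int : IntegrableOn g (Icc (0:ℝ) a_m) := hGint.add hindint.integrableOn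
  -- main comparison
  refine le_trans (integral_mono_of_nonneg (ae_of_all _ fun a => norm_nonneg _) hg_int
    ((ae_restrict_iff' measurableSet_Icc).2 (ae_of_all _ hpt))) ?_
  rw [← hIeq]
  -- compute/estimate ∫ g
  have hsplitg : ∫ a in Icc (0:ℝ) a_m, g a =
      (∫ a in Icc (0:ℝ) a_m, (ε₁ * I + M * (F (a + h) - F a))) +
      ∫ a in Icc (0:ℝ) a_m, (M * I) * (Ioc (a_m - h) a_m).indicator (fun _ => (1:ℝ)) a :=
    integral_add hGint hindint.integrableOn
  -- first piece
  have hconstint : IntegrableOn (fun _ : ℝ => ε₁ * I) (Icc (0:ℝ) a_m) :=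
    integrableOn_const measure_Icc_lt_top.ne
  have hGint2 : IntegrableOn (fun a => M * (F (a + h) - F a)) (Icc (0:ℝ) a_m) := by
    have h0 := hGint.sub hconstint
    exact h0.congr (ae_of_all _ fun a => by simp only [Pi.sub_apply]; ring)
  have hsplit1 : (∫ a in Icc (0:ℝ) a_m, (ε₁ * I + M * (F (a + h) - F a))) =
      (∫ _ in Icc (0:ℝ) a_m, ε₁ * I) + ∫ a in Icc (0:ℝ) a_m, M * (F (a + h) - F a) :=
    integral_add hconstint hGint2
  have hconst_eval : (∫ _ in Icc (0:ℝ) a_m, (ε₁ * I : ℝ)) = a_m * (ε₁ * I) := by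
    rw [setIntegral_const, measureReal_def, Real.volume_Icc, smul_eq_mul]
    rw [show a_m - 0 = a_m by ring, ENNReal.toReal_ofReal ha_m.le]
  -- the translation estimate
  have hT2 : ∫ a in Icc (0:ℝ) a_m, (F (a + h) - F a) ≤ h * I := by
    have hiiF : ∀ x y : ℝ, IntervalIntegrable F volume x y :=
      hIIbdd F hFmeas (fun x => by rw [abs_of_nonneg (hF0 x)]; exact hFI x)
    have hiiFh : ∀ x y : ℝ, IntervalIntegrable (fun a => F (a + h)) volume x y :=
      hIIbdd _ (hFmeas.comp (measurable_add_const h))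
        (fun x => by rw [abs_of_nonneg (hF0 _)]; exact hFI _)
    rw [integral_Icc_eq_integral_Ioc, ← intervalIntegral.integral_of_le ha_m.le]
    rw [intervalIntegral.integral_sub (hiiFh 0 a_m) (hiiF 0 a_m)]
    have e1 : (∫ a in (0:ℝ)..a_m, F (a + h)) = ∫ a in h..(a_m + h), F a := by
      have := intervalIntegral.integral_comp_add_right (a := (0:ℝ)) (b := a_m) F h
      simpa using this
    rw [e1]
    have add1 : (∫ a in (0:ℝ)..h, F a) + ∫ a in h..(a_m + h), F a =
        ∫ a in (0:ℝ)..(a_m + h), F a :=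
      intervalIntegral.integral_add_adjacent_intervals (hiiF 0 h) (hiiF h (a_m + h))
    have add2 : (∫ a in (0:ℝ)..a_m, F a) + ∫ a in a_m..(a_m + h), F a =
        ∫ a in (0:ℝ)..(a_m + h), F a :=
      intervalIntegral.integral_add_adjacent_intervals (hiiF 0 a_m) (hiiF a_m (a_m + h))
    have b1 : (∫ a in a_m..(a_m + h), F a) ≤ h * I := by
      have hle : (∫ a in a_m..(a_m + h), F a) ≤ ∫ _ in a_m..(a_m + h), I :=
        intervalIntegral.integral_mono_on (by linarith) (hiiF _ _) intervalIntegrable_const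
          (fun x _ => hFI x)
      rw [intervalIntegral.integral_const, smul_eq_mul,
        show a_m + h - a_m = h by ring] at hle
      exact hle
    have b2 : 0 ≤ ∫ a in (0:ℝ)..h, F a :=
      intervalIntegral.integral_nonneg hh0.le (fun x _ => hF0 x)
    linarith
  have hT2' : (∫ a in Icc (0:ℝ) a_m, M * (F (a + h) - F a)) ≤ M * (h * I) := by
    rw [integral_const_mul]
    exact mul_le_mul_of_nonneg_left hT2 hM0.le
  -- the indicator piece
  have hT3 : (∫ a in Icc (0:ℝ) a_m, (M * I) * (Ioc (a_m - h) a_m).indicator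
      (fun _ => (1:ℝ)) a) ≤ (M * I) * h := by
    have hle : (∫ a in Icc (0:ℝ) a_m, (M * I) * (Ioc (a_m - h) a_m).indicator
        (fun _ => (1:ℝ)) a) ≤ ∫ a, (M * I) * (Ioc (a_m - h) a_m).indicator
        (fun _ => (1:ℝ)) a :=
      setIntegral_le_integral hindint (ae_of_all _ fun a =>
        mul_nonneg (mul_nonneg hM0.le hI0) (indicator_nonneg (fun _ _ => zero_le_one) a))
    refine le_trans hle ?_
    rw [integral_const_mul]
    have : (∫ a, (Ioc (a_m - h) a_m).indicator (fun _ => (1:ℝ)) a) = h := by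
      rw [show (fun _ : ℝ => (1:ℝ)) = (1 : ℝ → ℝ) from rfl,
        integral_indicator_one measurableSet_Ioc, measureReal_def, Real.volume_Ioc,
        show a_m - (a_m - h) = h by ring, ENNReal.toReal_ofReal hh0.le]
    rw [this]
  -- final arithmetic
  rw [hsplitg, hsplit1, hconst_eval]
  have hhε' : h * (4 * M) < ε := (lt_div_iff₀ (by linarith)).1 hhε
  have harith1 : a_m * (ε₁ * I) ≤ (ε / 2) * I := by
    have hc : a_m * ε₁ ≤ ε / 2 := by
      rw [hε₁def, ← mul_div_assoc]
      rw [div_le_div_iff₀ (by linarith) (by norm_num : (0:ℝ) < 2)]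
      nlinarith [hε.le]
    calc a_m * (ε₁ * I) = (a_m * ε₁) * I := by ring
      _ ≤ (ε / 2) * I := mul_le_mul_of_nonneg_right hc hI0
  have hc4 : M * h ≤ ε / 4 := by linarith
  have harith2 : M * (h * I) ≤ (ε / 4) * I := by
    calc M * (h * I) = (M * h) * I := by ring
      _ ≤ (ε / 4) * I := mul_le_mul_of_nonneg_right hc4 hI0
  have harith3 : (M * I) * h ≤ (ε / 4) * I := by
    calc (M * I) * h = (M * h) * I := by ring
      _ ≤ (ε / 4) * I := mul_le_mul_of_nonneg_right hc4 hI0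
  linarith [hT2', hT3, harith1, harith2, harith3]
end

section
/- Under hypotheses (E1)–(E4), the regularized operators converge to the Volterra operator uniformly on bounded sets as μ → 0: for every ε > 0 there exists μ₀ ∈ (0, a_m] such that for all μ ∈ (0, μ₀) and all φ ∈ L¹(J,E₀), ‖v_φ^μ − u_φ‖_{L¹(J,E₀)} ≤ ε ‖φ‖_{L¹(J,E₀)}. -/
open MeasureTheory Set Filter Topology

set_option maxHeartbeats 1000000 in
/-- Under (E1)–(E4), the regularized operators converge to the Volterra
operator uniformly on bounded sets as `μ → 0`: for every `ε > 0` there exists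
`μ₀ ∈ (0, a_m]` such that for all `μ ∈ (0, μ₀)` and all `φ ∈ L¹(J,E₀)`,
`‖v_φ^μ − u_φ‖_{L¹(J,E₀)} ≤ ε ‖φ‖_{L¹(J,E₀)}`. -/
theorem regularized_volterra_converges
    {E₀ Eϑ : Type*} [NormedAddCommGroup E₀] [NormedSpace ℝ E₀]
    [NormedAddCommGroup Eϑ] [NormedSpace ℝ Eϑ]
    (ι : Eϑ →L[ℝ] E₀) (hι_inj : Function.Injective ι)
    (hι_cpt : IsCompactOperator (ι : Eϑ →L[ℝ] E₀))
    (a_m : ℝ) (ha_m : 0 < a_m)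
    (ϑ : ℝ) (hϑ : ϑ ∈ Set.Ioo (0 : ℝ) 1)
    (M : ℝ) (hM : 1 ≤ M)
    (P : ℝ → ℝ → E₀ →L[ℝ] E₀) (Pθ : ℝ → ℝ → E₀ →L[ℝ] Eϑ)
    -- (E1)
    (hE1a : ∀ a, 0 ≤ a → a ≤ 2 * a_m → P a a = ContinuousLinearMap.id ℝ E₀)
    (hE1b : ∀ σ ρ a, 0 ≤ σ → σ ≤ ρ → ρ ≤ a → a ≤ 2 * a_m →
      (P a ρ).comp (P ρ σ) = P a σ)
    -- (E2)
    (hE2 : ContinuousOn (fun p : ℝ × ℝ => P p.1 p.2)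
      {p : ℝ × ℝ | 0 ≤ p.2 ∧ p.2 < p.1 ∧ p.1 ≤ 2 * a_m})
    -- (E3)
    (hE3 : ∀ σ a, 0 ≤ σ → σ < a → a ≤ 2 * a_m → ι.comp (Pθ a σ) = P a σ)
    -- (E4)
    (hE4a : ∀ σ a, 0 ≤ σ → σ ≤ a → a ≤ 2 * a_m → ‖P a σ‖ ≤ M)
    (hE4b : ∀ σ a, 0 ≤ σ → σ < a → a ≤ 2 * a_m → (a - σ) ^ ϑ * ‖Pθ a σ‖ ≤ M) :
    ∀ ε > (0 : ℝ), ∃ μ₀ ∈ Set.Ioc (0 : ℝ) a_m, ∀ μ : ℝ, 0 < μ → μ < μ₀ →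
      ∀ φ : ℝ → E₀, IntegrableOn φ (Set.Icc (0 : ℝ) a_m) →
        (∫ a in Set.Icc (0 : ℝ) a_m,
          ‖(∫ σ in (0 : ℝ)..a, P (μ + a) σ (φ σ)) - ∫ σ in (0 : ℝ)..a, P a σ (φ σ)‖) ≤
          ε * ∫ a in Set.Icc (0 : ℝ) a_m, ‖φ a‖ := by
  intro ε hε
  have hM0 : (0:ℝ) < M := lt_of_lt_of_le one_pos hM
  set δ : ℝ := ε / (8 * M) with hδ_def
  have hδ : 0 < δ := by positivity
  set ε' : ℝ := ε / (2 * a_m) with hε'_def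
  have hε'pos : 0 < ε' := by positivity
  -- the compact region away from the diagonal
  set K : Set (ℝ × ℝ) := {p | 0 ≤ p.2 ∧ p.2 + δ ≤ p.1 ∧ p.1 ≤ 2 * a_m} with hK_def
  have hKsub : K ⊆ {p : ℝ × ℝ | 0 ≤ p.2 ∧ p.2 < p.1 ∧ p.1 ≤ 2 * a_m} := by
    rintro p ⟨h1, h2, h3⟩
    exact ⟨h1, by linarith, h3⟩
  have hKcl : IsClosed K := by
    have h1 : IsClosed {p : ℝ × ℝ | 0 ≤ p.2} := isClosed_le continuous_const continuous_snd
    have h2 : IsClosed {p : ℝ × ℝ | p.2 + δ ≤ p.1} :=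
      isClosed_le (continuous_snd.add continuous_const) continuous_fst
    have h3 : IsClosed {p : ℝ × ℝ | p.1 ≤ 2 * a_m} := isClosed_le continuous_fst continuous_const
    have hKeq : K = ({p : ℝ × ℝ | 0 ≤ p.2} ∩ {p : ℝ × ℝ | p.2 + δ ≤ p.1}) ∩
        {p : ℝ × ℝ | p.1 ≤ 2 * a_m} := by
      ext p
      simp [hK_def, Set.mem_setOf_eq, and_assoc]
    rw [hKeq]
    exact (h1.inter h2).inter h3
  have hKcpt : IsCompact K := by
    refine IsCompact.of_isClosed_subset (isCompact_Icc (a := ((0:ℝ), (0:ℝ)))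
      (b := (2 * a_m, 2 * a_m))) hKcl ?_
    rintro ⟨x, y⟩ hp
    obtain ⟨h1, h2, h3⟩ := hp
    simp only at h1 h2 h3
    simp only [Set.mem_Icc, Prod.mk_le_mk]
    exact ⟨⟨by linarith, h1⟩, h3, by linarith⟩
  have hUC := hKcpt.uniformContinuousOn_of_continuous (hE2.mono hKsub)
  obtain ⟨η, hη, hUC⟩ := Metric.uniformContinuousOn_iff.mp hUC ε' hε'pos
  refine ⟨min η a_m, ⟨lt_min hη ha_m, min_le_right _ _⟩, ?_⟩
  intro μ hμ hμ' φ hφ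
  have hμam : μ ≤ a_m := le_of_lt (lt_of_lt_of_le hμ' (min_le_right _ _))
  have hμη : μ < η := lt_of_lt_of_le hμ' (min_le_left _ _)
  set Iφ : ℝ := ∫ a in Set.Icc (0:ℝ) a_m, ‖φ a‖ with hIφ_def
  have hIφ : (0:ℝ) ≤ Iφ := setIntegral_nonneg measurableSet_Icc fun x _ => norm_nonneg _
  have hφm : AEStronglyMeasurable φ (volume.restrict (Icc (0:ℝ) a_m)) := hφ.aestronglyMeasurable
  -- measurability of the integrands
  have hPmeas : ∀ t a : ℝ, 0 ≤ a → a ≤ t → t ≤ 2 * a_m → a ≤ a_m →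
      AEStronglyMeasurable (fun σ => P t σ (φ σ)) (volume.restrict (Ioc 0 a)) := by
    intro t a ha0 hat ht ham
    have hres : volume.restrict (Ioc (0:ℝ) a) = volume.restrict (Ioo (0:ℝ) a) :=
      (Measure.restrict_congr_set Ioo_ae_eq_Ioc).symm
    rw [hres]
    have hmap : MapsTo (fun σ : ℝ => ((t, σ) : ℝ × ℝ)) (Ioo 0 a)
        {p : ℝ × ℝ | 0 ≤ p.2 ∧ p.2 < p.1 ∧ p.1 ≤ 2 * a_m} := by
      intro σ hσ
      exact ⟨hσ.1.le, hσ.2.trans_le hat, ht⟩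
    have hc : ContinuousOn (fun σ : ℝ => P t σ) (Ioo 0 a) :=
      hE2.comp ((continuous_const.prodMk continuous_id).continuousOn) hmap
    have h1 : AEStronglyMeasurable (fun σ : ℝ => P t σ) (volume.restrict (Ioo 0 a)) :=
      hc.aestronglyMeasurable measurableSet_Ioo
    have h2 : AEStronglyMeasurable φ (volume.restrict (Ioo 0 a)) := by
      refine hφm.mono_measure (Measure.restrict_mono ?_ le_rfl)
      intro σ hσ
      exact ⟨hσ.1.le, hσ.2.le.trans ham⟩
    exact isBoundedBilinearMap_apply.continuous.comp_aestronglyMeasurable (h1.prodMk h2)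
  have hPint : ∀ t a : ℝ, 0 ≤ a → a ≤ t → t ≤ 2 * a_m → a ≤ a_m →
      IntegrableOn (fun σ => P t σ (φ σ)) (Ioc 0 a) := by
    intro t a ha0 hat ht ham
    have hsub : Ioc (0:ℝ) a ⊆ Icc 0 a_m := fun σ hσ => ⟨hσ.1.le, hσ.2.trans ham⟩
    refine Integrable.mono' (g := fun σ => M * ‖φ σ‖)
      (IntegrableOn.mono_set (hφ.norm.const_mul M) hsub) (hPmeas t a ha0 hat ht ham) ?_
    · filter_upwards [ae_restrict_mem measurableSet_Ioc] with σ hσ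
      calc ‖P t σ (φ σ)‖ ≤ ‖P t σ‖ * ‖φ σ‖ := (P t σ).le_opNorm _
        _ ≤ M * ‖φ σ‖ := by
            have := hE4a σ t hσ.1.le (hσ.2.trans hat) ht
            exact mul_le_mul_of_nonneg_right this (norm_nonneg _)
  -- pointwise (in a) bounds on the operator difference
  have hΔsmall : ∀ a ∈ Icc (0:ℝ) a_m, ∀ σ ∈ Ioc (0:ℝ) (max (a - δ) 0),
      ‖P (μ + a) σ - P a σ‖ ≤ ε' := by
    rintro a ⟨ha0, ham⟩ σ ⟨hσ0, hσc⟩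
    have hσa : σ ≤ a - δ := by
      rcases le_max_iff.mp hσc with h | h
      · exact h
      · linarith
    have hx : ((μ + a, σ) : ℝ × ℝ) ∈ K := by
      simp only [hK_def, Set.mem_setOf_eq]
      exact ⟨hσ0.le, by linarith, by linarith⟩
    have hy : ((a, σ) : ℝ × ℝ) ∈ K := by
      simp only [hK_def, Set.mem_setOf_eq]
      exact ⟨hσ0.le, by linarith, by linarith⟩
    have hd : dist ((μ + a, σ) : ℝ × ℝ) ((a, σ) : ℝ × ℝ) < η := by
      rw [Prod.dist_eq]
      simp only [dist_self]
      rw [max_eq_left dist_nonneg]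
      rw [Real.dist_eq]
      rw [show μ + a - a = μ by ring, abs_of_pos hμ]
      exact hμη
    have := hUC _ hx _ hy hd
    simp only [dist_eq_norm] at this
    exact this.le
  have hΔbig : ∀ a ∈ Icc (0:ℝ) a_m, ∀ σ ∈ Ioc (max (a - δ) 0) a,
      ‖P (μ + a) σ - P a σ‖ ≤ 2 * M := by
    rintro a ⟨ha0, ham⟩ σ ⟨hσc, hσa⟩
    have hσ0 : 0 ≤ σ := le_of_lt (lt_of_le_of_lt (le_max_right _ _) hσc)
    have h1 : ‖P (μ + a) σ‖ ≤ M := hE4a σ (μ + a) hσ0 (by linarith) (by linarith)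
    have h2 : ‖P a σ‖ ≤ M := hE4a σ a hσ0 hσa (by linarith)
    calc ‖P (μ + a) σ - P a σ‖ ≤ ‖P (μ + a) σ‖ + ‖P a σ‖ := norm_sub_le _ _
      _ ≤ 2 * M := by linarith
  -- the key pointwise-in-`a` estimate
  have key : ∀ a ∈ Icc (0:ℝ) a_m,
      ‖(∫ σ in (0:ℝ)..a, P (μ + a) σ (φ σ)) - ∫ σ in (0:ℝ)..a, P a σ (φ σ)‖ ≤
        ε' * Iφ + 2 * M * ∫ σ in Ioc (max (a - δ) 0) a, ‖φ σ‖ := by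
    intro a ha
    obtain ⟨ha0, ham⟩ := ha
    have hc0 : (0:ℝ) ≤ max (a - δ) 0 := le_max_right _ _
    have hca : max (a - δ) 0 ≤ a := max_le (by linarith) ha0
    have hint1 : IntegrableOn (fun σ => P (μ + a) σ (φ σ)) (Ioc 0 a) :=
      hPint (μ + a) a ha0 (by linarith) (by linarith) ham
    have hint2 : IntegrableOn (fun σ => P a σ (φ σ)) (Ioc 0 a) :=
      hPint a a ha0 le_rfl (by linarith) ham
    have hintd : IntegrableOn (fun σ => P (μ + a) σ (φ σ) - P a σ (φ σ)) (Ioc 0 a) :=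
      hint1.sub hint2
    rw [intervalIntegral.integral_of_le ha0, intervalIntegral.integral_of_le ha0,
      ← integral_sub hint1 hint2]
    have hb1 : (∫ σ in Ioc (0:ℝ) (max (a - δ) 0), ‖P (μ + a) σ (φ σ) - P a σ (φ σ)‖) ≤
        ε' * Iφ := by
      have hsub1 : Ioc (0:ℝ) (max (a - δ) 0) ⊆ Ioc 0 a := Ioc_subset_Ioc le_rfl hca
      have hsub2 : Ioc (0:ℝ) (max (a - δ) 0) ⊆ Icc 0 a_m := by
        intro σ hσ
        exact ⟨hσ.1.le, le_trans (hσ.2.trans hca) ham⟩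
      have step1 : (∫ σ in Ioc (0:ℝ) (max (a - δ) 0), ‖P (μ + a) σ (φ σ) - P a σ (φ σ)‖) ≤
          ∫ σ in Ioc (0:ℝ) (max (a - δ) 0), ε' * ‖φ σ‖ := by
        refine setIntegral_mono_on (IntegrableOn.mono_set hintd.norm hsub1)
          (IntegrableOn.mono_set (hφ.norm.const_mul ε') hsub2) measurableSet_Ioc ?_
        intro σ hσ
        have heq : P (μ + a) σ (φ σ) - P a σ (φ σ) = (P (μ + a) σ - P a σ) (φ σ) := by
          simp [ContinuousLinearMap.sub_apply]
        rw [heq]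
        calc ‖(P (μ + a) σ - P a σ) (φ σ)‖ ≤ ‖P (μ + a) σ - P a σ‖ * ‖φ σ‖ :=
              (P (μ + a) σ - P a σ).le_opNorm _
          _ ≤ ε' * ‖φ σ‖ := mul_le_mul_of_nonneg_right
              (hΔsmall a ⟨ha0, ham⟩ σ hσ) (norm_nonneg _)
      have step2 : (∫ σ in Ioc (0:ℝ) (max (a - δ) 0), ε' * ‖φ σ‖) ≤ ε' * Iφ := by
        rw [integral_const_mul]
        refine mul_le_mul_of_nonneg_left ?_ hε'pos.le
        refine setIntegral_mono_set hφ.norm ?_ hsub2.eventuallyLE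
        filter_upwards with σ using norm_nonneg _
      exact step1.trans step2
    have hb2 : (∫ σ in Ioc (max (a - δ) 0) a, ‖P (μ + a) σ (φ σ) - P a σ (φ σ)‖) ≤
        2 * M * ∫ σ in Ioc (max (a - δ) 0) a, ‖φ σ‖ := by
      rw [← integral_const_mul]
      have hsub3 : Ioc (max (a - δ) 0) a ⊆ Ioc 0 a := Ioc_subset_Ioc hc0 le_rfl
      have hsub4 : Ioc (max (a - δ) 0) a ⊆ Icc 0 a_m := fun σ hσ =>
        ⟨le_of_lt (lt_of_le_of_lt hc0 hσ.1), hσ.2.trans ham⟩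
      refine setIntegral_mono_on (IntegrableOn.mono_set hintd.norm hsub3)
        (IntegrableOn.mono_set (hφ.norm.const_mul (2 * M)) hsub4) measurableSet_Ioc ?_
      intro σ hσ
      have heq : P (μ + a) σ (φ σ) - P a σ (φ σ) = (P (μ + a) σ - P a σ) (φ σ) := by
        simp [ContinuousLinearMap.sub_apply]
      rw [heq]
      calc ‖(P (μ + a) σ - P a σ) (φ σ)‖ ≤ ‖P (μ + a) σ - P a σ‖ * ‖φ σ‖ :=
            (P (μ + a) σ - P a σ).le_opNorm _
        _ ≤ 2 * M * ‖φ σ‖ := mul_le_mul_of_nonneg_right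
            (hΔbig a ⟨ha0, ham⟩ σ hσ) (norm_nonneg _)
    calc ‖∫ σ in Ioc (0:ℝ) a, (P (μ + a) σ (φ σ) - P a σ (φ σ))‖
        ≤ ∫ σ in Ioc (0:ℝ) a, ‖P (μ + a) σ (φ σ) - P a σ (φ σ)‖ :=
          norm_integral_le_integral_norm _
      _ = (∫ σ in Ioc (0:ℝ) (max (a - δ) 0), ‖P (μ + a) σ (φ σ) - P a σ (φ σ)‖) +
          ∫ σ in Ioc (max (a - δ) 0) a, ‖P (μ + a) σ (φ σ) - P a σ (φ σ)‖ := by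
          rw [← setIntegral_union (Ioc_disjoint_Ioc_of_le le_rfl) measurableSet_Ioc
            (IntegrableOn.mono_set hintd.norm (Ioc_subset_Ioc le_rfl hca))
            (IntegrableOn.mono_set hintd.norm (Ioc_subset_Ioc hc0 le_rfl)),
            Ioc_union_Ioc_eq_Ioc hc0 hca]
      _ ≤ ε' * Iφ + 2 * M * ∫ σ in Ioc (max (a - δ) 0) a, ‖φ σ‖ := add_le_add hb1 hb2
  -- now integrate in `a`
  by_cases hNint : IntegrableOn (fun a : ℝ =>
      ‖(∫ σ in (0:ℝ)..a, P (μ + a) σ (φ σ)) - ∫ σ in (0:ℝ)..a, P a σ (φ σ)‖) (Icc 0 a_m)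
  swap
  · rw [integral_undef hNint]
    exact mul_nonneg hε.le hIφ
  haveI hfin : IsFiniteMeasure (volume.restrict (Icc (0:ℝ) a_m)) :=
    ⟨by rw [Measure.restrict_apply_univ]; exact measure_Icc_lt_top⟩
  -- the primitive of ‖φ‖ and the split of the near-diagonal integral
  have hHcont : ContinuousOn (fun x => ∫ σ in Ioc (0:ℝ) x, ‖φ σ‖) (Icc 0 a_m) :=
    intervalIntegral.continuousOn_primitive hφ.norm
  have hsplit : ∀ a ∈ Icc (0:ℝ) a_m,
      (∫ σ in Ioc (max (a - δ) 0) a, ‖φ σ‖) =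
        (∫ σ in Ioc (0:ℝ) a, ‖φ σ‖) - ∫ σ in Ioc (0:ℝ) (max (a - δ) 0), ‖φ σ‖ := by
    rintro a ⟨ha0, ham⟩
    have hc0 : (0:ℝ) ≤ max (a - δ) 0 := le_max_right _ _
    have hca : max (a - δ) 0 ≤ a := max_le (by linarith) ha0
    have h1 : IntegrableOn (fun σ => ‖φ σ‖) (Ioc 0 (max (a - δ) 0)) :=
      IntegrableOn.mono_set hφ.norm (fun σ hσ => ⟨hσ.1.le, (hσ.2.trans hca).trans ham⟩)
    have h2 : IntegrableOn (fun σ => ‖φ σ‖) (Ioc (max (a - δ) 0) a) :=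
      IntegrableOn.mono_set hφ.norm (fun σ hσ => ⟨hc0.trans hσ.1.le, hσ.2.trans ham⟩)
    have hu : (∫ σ in Ioc (0:ℝ) a, ‖φ σ‖) =
        (∫ σ in Ioc (0:ℝ) (max (a - δ) 0), ‖φ σ‖) + ∫ σ in Ioc (max (a - δ) 0) a, ‖φ σ‖ := by
      rw [← setIntegral_union (Ioc_disjoint_Ioc_of_le le_rfl) measurableSet_Ioc h1 h2,
        Ioc_union_Ioc_eq_Ioc hc0 hca]
    linarith
  -- integrability of the dominating function
  have hmaxc : ContinuousOn (fun a : ℝ => max (a - δ) 0) (Icc 0 a_m) :=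
    ((continuous_id.sub continuous_const).max continuous_const).continuousOn
  have hmaps : MapsTo (fun a : ℝ => max (a - δ) 0) (Icc 0 a_m) (Icc 0 a_m) := by
    rintro a ⟨ha0, ham⟩
    exact ⟨le_max_right _ _, max_le (by linarith) ha_m.le⟩
  have hDcont : ContinuousOn (fun a : ℝ =>
      (∫ σ in Ioc (0:ℝ) a, ‖φ σ‖) - ∫ σ in Ioc (0:ℝ) (max (a - δ) 0), ‖φ σ‖) (Icc 0 a_m) :=
    hHcont.sub (hHcont.comp hmaxc hmaps)
  have hDint : IntegrableOn (fun a : ℝ =>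
      (∫ σ in Ioc (0:ℝ) a, ‖φ σ‖) - ∫ σ in Ioc (0:ℝ) (max (a - δ) 0), ‖φ σ‖) (Icc 0 a_m) :=
    hDcont.integrableOn_Icc
  have hconstint : IntegrableOn (fun _ : ℝ => ε' * Iφ) (Icc 0 a_m) :=
    integrableOn_const measure_Icc_lt_top.ne
  have hGint : IntegrableOn (fun a : ℝ => ε' * Iφ + 2 * M *
      ((∫ σ in Ioc (0:ℝ) a, ‖φ σ‖) - ∫ σ in Ioc (0:ℝ) (max (a - δ) 0), ‖φ σ‖)) (Icc 0 a_m) :=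
    hconstint.add (hDint.const_mul (2 * M))
  -- monotonicity step
  have hmono : (∫ a in Icc (0:ℝ) a_m,
      ‖(∫ σ in (0:ℝ)..a, P (μ + a) σ (φ σ)) - ∫ σ in (0:ℝ)..a, P a σ (φ σ)‖) ≤
      ∫ a in Icc (0:ℝ) a_m, (ε' * Iφ + 2 * M *
        ((∫ σ in Ioc (0:ℝ) a, ‖φ σ‖) - ∫ σ in Ioc (0:ℝ) (max (a - δ) 0), ‖φ σ‖)) := by
    refine setIntegral_mono_on hNint hGint measurableSet_Icc ?_
    intro a ha
    refine (key a ha).trans (le_of_eq ?_)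
    rw [hsplit a ha]
  -- Fubini: the near-diagonal part is small
  have hT : (∫ a in Icc (0:ℝ) a_m,
      ((∫ σ in Ioc (0:ℝ) a, ‖φ σ‖) - ∫ σ in Ioc (0:ℝ) (max (a - δ) 0), ‖φ σ‖)) ≤ δ * Iφ := by
    classical
    set F : ℝ → ℝ → ℝ :=
      fun a σ => if max (a - δ) 0 < σ ∧ σ ≤ a then ‖φ σ‖ else 0 with hF_def
    have hS : MeasurableSet {p : ℝ × ℝ | max (p.1 - δ) 0 < p.2 ∧ p.2 ≤ p.1} :=
      (measurableSet_lt ((measurable_fst.sub measurable_const).max measurable_const)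
        measurable_snd).inter (measurableSet_le measurable_snd measurable_fst)
    have hFind : Function.uncurry F =
        Set.indicator {p : ℝ × ℝ | max (p.1 - δ) 0 < p.2 ∧ p.2 ≤ p.1}
          (fun p : ℝ × ℝ => ‖φ p.2‖) := by
      funext p
      simp [hF_def, Function.uncurry, Set.indicator_apply, Set.mem_setOf_eq]
    have hgint : Integrable (fun p : ℝ × ℝ => ‖φ p.2‖)
        ((volume.restrict (Icc (0:ℝ) a_m)).prod (volume.restrict (Icc (0:ℝ) a_m))) := by
      have := (integrable_const (1:ℝ) (μ := volume.restrict (Icc (0:ℝ) a_m))).mul_prod hφ.norm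
      simpa using this
    have hFprod : Integrable (Function.uncurry F)
        ((volume.restrict (Icc (0:ℝ) a_m)).prod (volume.restrict (Icc (0:ℝ) a_m))) := by
      rw [hFind]
      exact hgint.indicator hS
    -- rewrite the left-hand side as an iterated integral of F
    have hFin : ∀ a ∈ Icc (0:ℝ) a_m,
        ((∫ σ in Ioc (0:ℝ) a, ‖φ σ‖) - ∫ σ in Ioc (0:ℝ) (max (a - δ) 0), ‖φ σ‖) =
          ∫ σ in Icc (0:ℝ) a_m, F a σ := by
      intro a ha
      rw [← hsplit a ha]
      have hsub : Ioc (max (a - δ) 0) a ⊆ Icc 0 a_m := fun σ hσ =>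
        ⟨le_of_lt (lt_of_le_of_lt (le_max_right _ _) hσ.1), hσ.2.trans ha.2⟩
      have heq : ∀ σ : ℝ, F a σ = (Ioc (max (a - δ) 0) a).indicator (fun s => ‖φ s‖) σ := by
        intro σ
        simp [hF_def, Set.indicator_apply, Set.mem_Ioc]
      calc (∫ σ in Ioc (max (a - δ) 0) a, ‖φ σ‖)
          = ∫ σ in Icc (0:ℝ) a_m ∩ Ioc (max (a - δ) 0) a, ‖φ σ‖ := by
            rw [Set.inter_eq_self_of_subset_right hsub]
        _ = ∫ σ in Icc (0:ℝ) a_m, (Ioc (max (a - δ) 0) a).indicator (fun s => ‖φ s‖) σ :=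
            (setIntegral_indicator measurableSet_Ioc).symm
        _ = ∫ σ in Icc (0:ℝ) a_m, F a σ := by
            simp only [heq]
    have hswap := integral_integral_swap hFprod
    calc (∫ a in Icc (0:ℝ) a_m,
        ((∫ σ in Ioc (0:ℝ) a, ‖φ σ‖) - ∫ σ in Ioc (0:ℝ) (max (a - δ) 0), ‖φ σ‖))
        = ∫ a in Icc (0:ℝ) a_m, ∫ σ in Icc (0:ℝ) a_m, F a σ :=
          setIntegral_congr_fun measurableSet_Icc (fun a ha => hFin a ha)
      _ = ∫ σ in Icc (0:ℝ) a_m, ∫ a in Icc (0:ℝ) a_m, F a σ := hswap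
      _ ≤ ∫ σ in Icc (0:ℝ) a_m, δ * ‖φ σ‖ := by
          refine setIntegral_mono_on hFprod.integral_prod_right
            (hφ.norm.const_mul δ) measurableSet_Icc ?_
          intro σ hσ
          have hB : MeasurableSet {a : ℝ | max (a - δ) 0 < σ ∧ σ ≤ a} :=
            (measurableSet_lt ((measurable_id.sub measurable_const).max measurable_const)
              measurable_const).inter (measurableSet_le measurable_const measurable_id)
          have heq2 : ∀ a : ℝ, F a σ =
              Set.indicator {a : ℝ | max (a - δ) 0 < σ ∧ σ ≤ a} (fun _ => ‖φ σ‖) a := by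
            intro a
            simp [hF_def, Set.indicator_apply, Set.mem_setOf_eq]
          calc (∫ a in Icc (0:ℝ) a_m, F a σ)
              = ∫ a in Icc (0:ℝ) a_m,
                  Set.indicator {a : ℝ | max (a - δ) 0 < σ ∧ σ ≤ a} (fun _ => ‖φ σ‖) a := by
                simp only [heq2]
            _ = ∫ a in Icc (0:ℝ) a_m ∩ {a : ℝ | max (a - δ) 0 < σ ∧ σ ≤ a}, ‖φ σ‖ :=
                setIntegral_indicator hB
            _ = (volume (Icc (0:ℝ) a_m ∩ {a : ℝ | max (a - δ) 0 < σ ∧ σ ≤ a})).toReal • ‖φ σ‖ :=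
                setIntegral_const _
            _ ≤ δ * ‖φ σ‖ := by
                rw [smul_eq_mul]
                refine mul_le_mul_of_nonneg_right ?_ (norm_nonneg _)
                have hsub2 : Icc (0:ℝ) a_m ∩ {a : ℝ | max (a - δ) 0 < σ ∧ σ ≤ a} ⊆
                    Ico σ (σ + δ) := by
                  rintro a ⟨_, h1, h2⟩
                  have : a - δ < σ := lt_of_le_of_lt (le_max_left _ _) h1
                  exact ⟨h2, by linarith⟩
                have hv : volume (Icc (0:ℝ) a_m ∩ {a : ℝ | max (a - δ) 0 < σ ∧ σ ≤ a}) ≤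
                    volume (Ico σ (σ + δ)) := measure_mono hsub2
                have he : σ + δ - σ = δ := by ring
                rw [Real.volume_Ico, he] at hv
                exact ENNReal.toReal_le_of_le_ofReal hδ.le hv
      _ = δ * Iφ := by rw [integral_const_mul]
  -- put everything together
  have hIadd : (∫ a in Icc (0:ℝ) a_m, (ε' * Iφ + 2 * M *
      ((∫ σ in Ioc (0:ℝ) a, ‖φ σ‖) - ∫ σ in Ioc (0:ℝ) (max (a - δ) 0), ‖φ σ‖))) =
      a_m * (ε' * Iφ) + 2 * M * ∫ a in Icc (0:ℝ) a_m,
        ((∫ σ in Ioc (0:ℝ) a, ‖φ σ‖) - ∫ σ in Ioc (0:ℝ) (max (a - δ) 0), ‖φ σ‖) := by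
    rw [integral_add hconstint (hDint.const_mul (2 * M)), integral_const_mul, setIntegral_const,
      smul_eq_mul, measureReal_def, Real.volume_Icc, sub_zero, ENNReal.toReal_ofReal ha_m.le, integral_const_mul]
    ring
  have e1 : a_m * (ε' * Iφ) = ε / 2 * Iφ := by
    rw [hε'_def]
    field_simp
  have e2 : 2 * M * (δ * Iφ) = ε / 4 * Iφ := by
    rw [hδ_def]
    field_simp
    ring
  have hfinal : (∫ a in Icc (0:ℝ) a_m,
      ‖(∫ σ in (0:ℝ)..a, P (μ + a) σ (φ σ)) - ∫ σ in (0:ℝ)..a, P a σ (φ σ)‖) ≤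
      ε / 2 * Iφ + ε / 4 * Iφ := by
    rw [← e1, ← e2]
    refine hmono.trans ?_
    rw [hIadd]
    have := mul_le_mul_of_nonneg_left hT (by linarith : (0:ℝ) ≤ 2 * M)
    linarith
  refine hfinal.trans ?_
  nlinarith [mul_nonneg hε.le hIφ]
end

section
/- Under hypotheses (E1)–(E4), for every fixed μ ∈ (0, a_m] the linear operator V^μ : L¹(J,E₀) → L¹(J,E₀) defined by (V^μ φ)(a) := v_φ^μ(a) = ∫₀^a Π(μ+a,σ)φ(σ) dσ is compact; that is, for every bounded sequence (φ_j) in L¹(J,E₀) the set {v_{φ_j}^μ : j ∈ ℕ} is relatively compact in L¹(J,E₀). -/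
open MeasureTheory Set Filter Topology

section Aux

variable {E₀ : Type*} [NormedAddCommGroup E₀] [NormedSpace ℝ E₀]
variable {α : Type*} [MeasurableSpace α] {ν : Measure α} [IsFiniteMeasure ν]

/-- Integrability of the applied kernel on the product space. -/
lemma kernel_apply_integrable {k : α × α → E₀ →L[ℝ] E₀}
    (hk : AEStronglyMeasurable k (ν.prod ν)) {B : ℝ}
    (hkB : ∀ p, ‖k p‖ ≤ B) {f : α → E₀} (hf : Integrable f ν) :
    Integrable (fun p : α × α => k p (f p.2)) (ν.prod ν) := by
  have hf2 : AEStronglyMeasurable (fun p : α × α => f p.2) (ν.prod ν) :=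
    hf.1.comp_quasiMeasurePreserving Measure.quasiMeasurePreserving_snd
  have hmeas : AEStronglyMeasurable (fun p : α × α => k p (f p.2)) (ν.prod ν) := by
    have hc : Continuous fun q : (E₀ →L[ℝ] E₀) × E₀ => q.1 q.2 :=
      isBoundedBilinearMap_apply.continuous
    exact hc.comp_aestronglyMeasurable (hk.prodMk hf2)
  have hdom : Integrable (fun p : α × α => (1 : ℝ) * (B * ‖f p.2‖)) (ν.prod ν) :=
    (integrable_const (1 : ℝ)).mul_prod (hf.norm.const_mul B)
  refine hdom.mono' hmeas (Eventually.of_forall fun p => ?_)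
  simp only [one_mul]
  calc ‖k p (f p.2)‖ ≤ ‖k p‖ * ‖f p.2‖ := (k p).le_opNorm _
    _ ≤ B * ‖f p.2‖ := by
        have := norm_nonneg (f p.2)
        nlinarith [hkB p, norm_nonneg (f p.2)]

/-- Existence of the kernel integral operator on `L¹`. -/
lemma exists_kernelOp (k : α × α → E₀ →L[ℝ] E₀)
    (hk : AEStronglyMeasurable k (ν.prod ν))
    (B : ℝ) (hB : 0 ≤ B) (hkB : ∀ p, ‖k p‖ ≤ B) :
    ∃ T : Lp E₀ 1 ν →L[ℝ] Lp E₀ 1 ν,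
      ∀ φ : Lp E₀ 1 ν, (T φ : α → E₀) =ᵐ[ν]
        fun a => ∫ σ, k (a, σ) ((φ : α → E₀) σ) ∂ν := by
  classical
  -- the raw map on functions
  set Vf : (α → E₀) → α → E₀ := fun f a => ∫ σ, k (a, σ) (f σ) ∂ν with hVf
  have hint : ∀ f : α → E₀, Integrable f ν → Integrable (Vf f) ν := fun f hf =>
    (kernel_apply_integrable hk hkB hf).integral_prod_left
  have hmem : ∀ φ : Lp E₀ 1 ν, MemLp (Vf (φ : α → E₀)) 1 ν := fun φ =>
    memLp_one_iff_integrable.2 (hint _ (L1.integrable_coeFn φ))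
  -- congruence in f
  have hcongr : ∀ f g : α → E₀, f =ᵐ[ν] g → ∀ a, Vf f a = Vf g a := by
    intro f g hfg a
    refine integral_congr_ae ?_
    filter_upwards [hfg] with σ hσ
    rw [hσ]
  have hadd : ∀ (f g : α → E₀), Integrable f ν → Integrable g ν →
      Vf (f + g) =ᵐ[ν] Vf f + Vf g := by
    intro f g hf hg
    have h1 := (kernel_apply_integrable hk hkB hf).prod_right_ae
    have h2 := (kernel_apply_integrable hk hkB hg).prod_right_ae
    filter_upwards [h1, h2] with a ha1 ha2
    simp only [Vf, Pi.add_apply, map_add]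
    exact integral_add ha1 ha2
  have hsmul : ∀ (c : ℝ) (f : α → E₀), Vf (c • f) = c • Vf f := by
    intro c f
    funext a
    simp only [Vf, Pi.smul_apply, ContinuousLinearMap.map_smul]
    exact integral_smul c _
  -- the bound
  have hbound : ∀ φ : Lp E₀ 1 ν, ‖(hmem φ).toLp _‖ ≤ (B * (ν univ).toReal) * ‖φ‖ := by
    intro φ
    set f : α → E₀ := (φ : α → E₀) with hf
    have hfi : Integrable f ν := L1.integrable_coeFn φ
    have hIf : ‖φ‖ = ∫ a, ‖f a‖ ∂ν := L1.norm_eq_integral_norm φ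
    have hae : ∀ᵐ a ∂ν, ‖Vf f a‖ ≤ B * ‖φ‖ := by
      filter_upwards [(kernel_apply_integrable hk hkB hfi).prod_right_ae] with a ha
      have h1 : ‖Vf f a‖ ≤ ∫ σ, B * ‖f σ‖ ∂ν := by
        refine norm_integral_le_of_norm_le (hfi.norm.const_mul B)
          (Eventually.of_forall fun σ => ?_)
        calc ‖k (a, σ) (f σ)‖ ≤ ‖k (a, σ)‖ * ‖f σ‖ := (k _).le_opNorm _
          _ ≤ B * ‖f σ‖ := mul_le_mul_of_nonneg_right (hkB _) (norm_nonneg _)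
      rw [integral_const_mul] at h1
      rw [hIf]
      exact h1
    have h2 : ‖(hmem φ).toLp _‖ = ∫ a, ‖Vf f a‖ ∂ν := by
      rw [L1.norm_eq_integral_norm]
      exact integral_congr_ae ((hmem φ).coeFn_toLp.fun_comp norm)
    rw [h2]
    calc ∫ a, ‖Vf f a‖ ∂ν ≤ ∫ _, B * ‖φ‖ ∂ν :=
        integral_mono_ae (hint f hfi).norm (integrable_const _) hae
      _ = (ν univ).toReal * (B * ‖φ‖) := by rw [integral_const, smul_eq_mul]; rfl
      _ = (B * (ν univ).toReal) * ‖φ‖ := by ring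
  -- the linear map
  refine ⟨LinearMap.mkContinuous
    { toFun := fun φ => (hmem φ).toLp _
      map_add' := ?_
      map_smul' := ?_ } (B * (ν univ).toReal) hbound, fun φ => (hmem φ).coeFn_toLp⟩
  · intro φ ψ
    rw [← MemLp.toLp_add (hmem φ) (hmem ψ)]
    apply MemLp.toLp_congr
    have h1 : Vf ((((φ : α → E₀)) + ((ψ : α → E₀)))) =ᵐ[ν] Vf (φ : α → E₀) + Vf (ψ : α → E₀) :=
      hadd _ _ (L1.integrable_coeFn φ) (L1.integrable_coeFn ψ)
    have h2 : ∀ a, Vf ((((φ + ψ : Lp E₀ 1 ν) : α → E₀))) a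
        = Vf (((φ : α → E₀)) + ((ψ : α → E₀))) a :=
      hcongr _ _ (Lp.coeFn_add φ ψ)
    exact Filter.EventuallyEq.trans (Eventually.of_forall h2) h1
  · intro c φ
    simp only [RingHom.id_apply]
    rw [← MemLp.toLp_const_smul c (hmem φ)]
    apply MemLp.toLp_congr
    have h2 : ∀ a, Vf (((c • φ : Lp E₀ 1 ν) : α → E₀)) a
        = Vf (c • ((φ : α → E₀))) a :=
      hcongr _ _ (Lp.coeFn_smul c φ)
    exact Filter.EventuallyEq.trans (Eventually.of_forall h2) (by rw [hsmul])

end Aux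

section Aux2

variable {E₀ : Type*} [NormedAddCommGroup E₀] [NormedSpace ℝ E₀] [CompleteSpace E₀]
variable {α : Type*} [MeasurableSpace α] {ν : Measure α} [IsFiniteMeasure ν]

/-- the "average over `s`" continuous linear map on L¹ -/
lemma exists_avgCLM (s : Set α) :
    ∃ T : Lp E₀ 1 ν →L[ℝ] E₀, ∀ φ : Lp E₀ 1 ν, T φ = ∫ σ in s, (φ : α → E₀) σ ∂ν := by
  have hb : ∀ φ : Lp E₀ 1 ν, ‖∫ σ in s, (φ : α → E₀) σ ∂ν‖ ≤ 1 * ‖φ‖ := by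
    intro φ
    rw [one_mul, L1.norm_eq_integral_norm]
    calc ‖∫ σ in s, (φ : α → E₀) σ ∂ν‖ ≤ ∫ σ in s, ‖(φ : α → E₀) σ‖ ∂ν :=
        norm_integral_le_integral_norm _
      _ ≤ ∫ σ, ‖(φ : α → E₀) σ‖ ∂ν :=
        integral_mono_measure Measure.restrict_le_self
          (Eventually.of_forall fun _ => norm_nonneg _) (L1.integrable_coeFn φ).norm
  refine ⟨LinearMap.mkContinuous
    { toFun := fun φ => ∫ σ in s, (φ : α → E₀) σ ∂ν
      map_add' := ?_
      map_smul' := ?_ } 1 hb, fun φ => rfl⟩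
  · intro φ ψ
    rw [← integral_add ((L1.integrable_coeFn φ).restrict)
      ((L1.integrable_coeFn ψ).restrict)]
    exact integral_congr_ae (ae_restrict_of_ae ((Lp.coeFn_add φ ψ)))
  · intro c φ
    simp only [RingHom.id_apply]
    rw [← integral_smul c]
    exact integral_congr_ae (ae_restrict_of_ae ((Lp.coeFn_smul c φ)))

/-- the "constant on `s`" continuous linear map into L¹ -/
lemma exists_embCLM (s : Set α) (hs : MeasurableSet s) :
    ∃ T : E₀ →L[ℝ] Lp E₀ 1 ν, ∀ x : E₀, (T x : α → E₀) =ᵐ[ν] s.indicator (fun _ => x) := by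
  have hmem : ∀ x : E₀, MemLp (s.indicator fun _ => x) 1 ν := fun x =>
    memLp_indicator_const 1 hs x (Or.inr (measure_ne_top ν s))
  have hb : ∀ x : E₀, ‖(hmem x).toLp _‖ ≤ (ν s).toReal * ‖x‖ := by
    intro x
    rw [L1.norm_eq_integral_norm]
    have h1 : ∀ a, ‖s.indicator (fun _ => x) a‖ = s.indicator (fun _ => ‖x‖) a := fun a =>
      norm_indicator_eq_indicator_norm _ _
    calc ∫ a, ‖((hmem x).toLp _ : α → E₀) a‖ ∂ν
        = ∫ a, s.indicator (fun _ => ‖x‖) a ∂ν := by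
          refine integral_congr_ae ?_
          filter_upwards [(hmem x).coeFn_toLp] with a ha
          rw [ha, h1]
      _ = (ν s).toReal * ‖x‖ := by
          rw [integral_indicator_const _ hs]; simp [smul_eq_mul]; exact Or.inl rfl
      _ ≤ (ν s).toReal * ‖x‖ := le_refl _
  refine ⟨LinearMap.mkContinuous
    { toFun := fun x => (hmem x).toLp _
      map_add' := ?_
      map_smul' := ?_ } ((ν s).toReal) hb, fun x => (hmem x).coeFn_toLp⟩
  · intro x y
    rw [← MemLp.toLp_add (hmem x) (hmem y)]
    apply MemLp.toLp_congr
    apply Eventually.of_forall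
    intro a
    classical
    by_cases ha : a ∈ s <;> simp [Set.indicator_apply, ha]
  · intro c x
    simp only [RingHom.id_apply]
    rw [← MemLp.toLp_const_smul c (hmem x)]
    apply MemLp.toLp_congr
    apply Eventually.of_forall
    intro a
    classical
    by_cases ha : a ∈ s <;> simp [Set.indicator_apply, ha]

/-- finite sums of compact operators are compact -/
lemma isCompactOperator_finset_sum {X Y : Type*} [NormedAddCommGroup X] [NormedSpace ℝ X]
    [NormedAddCommGroup Y] [NormedSpace ℝ Y] {κ : Type*} (t : Finset κ)
    (f : κ → X →L[ℝ] Y) (h : ∀ i ∈ t, IsCompactOperator ⇑(f i)) :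
    IsCompactOperator ⇑(∑ i ∈ t, f i) := by
  classical
  induction t using Finset.induction_on with
  | empty => simpa using isCompactOperator_zero
  | @insert i t hi ih =>
    rw [Finset.sum_insert hi]
    exact IsCompactOperator.add (h i (Finset.mem_insert_self i t))
      (ih fun j hj => h j (Finset.mem_insert_of_mem hj))

/-- coeFn of a finite sum in Lp -/
lemma Lp_coeFn_sum {κ : Type*} (t : Finset κ) (ψ : κ → Lp E₀ 1 ν) :
    ((∑ i ∈ t, ψ i : Lp E₀ 1 ν) : α → E₀) =ᵐ[ν] fun a => ∑ i ∈ t, (ψ i : α → E₀) a := by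
  classical
  induction t using Finset.induction_on with
  | empty =>
    simp only [Finset.sum_empty]
    exact Lp.coeFn_zero E₀ 1 ν
  | @insert i t hi ih =>
    rw [Finset.sum_insert hi]
    filter_upwards [Lp.coeFn_add (ψ i) (∑ j ∈ t, ψ j), ih] with a ha1 ha2
    rw [ha1, Finset.sum_insert hi, Pi.add_apply, ha2]

end Aux2

set_option maxHeartbeats 1000000 in
/-- Under (E1)–(E4), for every fixed `μ ∈ (0, a_m]` the linear operator
`V^μ : L¹(J,E₀) → L¹(J,E₀)`, `(V^μ φ)(a) = ∫₀^a Π(μ+a,σ)φ(σ) dσ`, is compact; that is,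
for every bounded sequence `(φ_j)` in `L¹(J,E₀)` the set `{v_{φ_j}^μ : j ∈ ℕ}` is
relatively compact in `L¹(J,E₀)`. -/
theorem regularized_volterra_operator_compact
    {E₀ Eϑ : Type*} [NormedAddCommGroup E₀] [NormedSpace ℝ E₀]
    [NormedAddCommGroup Eϑ] [NormedSpace ℝ Eϑ]
    (ι : Eϑ →L[ℝ] E₀) (hι_inj : Function.Injective ι)
    (hι_cpt : IsCompactOperator (ι : Eϑ →L[ℝ] E₀))
    (a_m : ℝ) (ha_m : 0 < a_m)
    (ϑ : ℝ) (hϑ : ϑ ∈ Set.Ioo (0 : ℝ) 1)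
    (M : ℝ) (hM : 1 ≤ M)
    (P : ℝ → ℝ → E₀ →L[ℝ] E₀) (Pθ : ℝ → ℝ → E₀ →L[ℝ] Eϑ)
    -- (E1)
    (hE1a : ∀ a, 0 ≤ a → a ≤ 2 * a_m → P a a = ContinuousLinearMap.id ℝ E₀)
    (hE1b : ∀ σ ρ a, 0 ≤ σ → σ ≤ ρ → ρ ≤ a → a ≤ 2 * a_m →
      (P a ρ).comp (P ρ σ) = P a σ)
    -- (E2)
    (hE2 : ContinuousOn (fun p : ℝ × ℝ => P p.1 p.2)
      {p : ℝ × ℝ | 0 ≤ p.2 ∧ p.2 < p.1 ∧ p.1 ≤ 2 * a_m})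
    -- (E3)
    (hE3 : ∀ σ a, 0 ≤ σ → σ < a → a ≤ 2 * a_m → ι.comp (Pθ a σ) = P a σ)
    -- (E4)
    (hE4a : ∀ σ a, 0 ≤ σ → σ ≤ a → a ≤ 2 * a_m → ‖P a σ‖ ≤ M)
    (hE4b : ∀ σ a, 0 ≤ σ → σ < a → a ≤ 2 * a_m → (a - σ) ^ ϑ * ‖Pθ a σ‖ ≤ M)
    -- fixed μ ∈ (0, a_m]
    (μ : ℝ) (hμ : μ ∈ Set.Ioc (0 : ℝ) a_m) :
    ∃ V : Lp E₀ 1 (volume.restrict (Set.Icc (0 : ℝ) a_m)) →L[ℝ]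
          Lp E₀ 1 (volume.restrict (Set.Icc (0 : ℝ) a_m)),
      -- V^μ is given by the regularized Volterra integral formula
      (∀ φ : Lp E₀ 1 (volume.restrict (Set.Icc (0 : ℝ) a_m)),
        ∀ᵐ a ∂(volume.restrict (Set.Icc (0 : ℝ) a_m)),
          (V φ : ℝ → E₀) a = ∫ σ in (0 : ℝ)..a, P (μ + a) σ ((φ : ℝ → E₀) σ)) ∧
      -- V^μ is a compact operator
      IsCompactOperator (V : Lp E₀ 1 (volume.restrict (Set.Icc (0 : ℝ) a_m)) →L[ℝ]
          Lp E₀ 1 (volume.restrict (Set.Icc (0 : ℝ) a_m))) ∧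
      -- that is: the image of every bounded sequence is relatively compact
      (∀ (φ : ℕ → Lp E₀ 1 (volume.restrict (Set.Icc (0 : ℝ) a_m))) (C : ℝ),
        (∀ j, ‖φ j‖ ≤ C) →
        IsCompact (closure (Set.range fun j => V (φ j)))) := by
  classical
  by_cases hCE : CompleteSpace E₀
  case neg =>
    -- in a non-complete space every Bochner integral is `0` by definition
    have hzero : ∀ (g : ℝ → E₀) (μ' : Measure ℝ), ∫ x, g x ∂μ' = 0 := by
      intro g μ'
      rw [MeasureTheory.integral_def]
      exact dif_neg hCE
    refine ⟨0, fun φ => ?_, ?_, fun φ C hC => ?_⟩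
    · filter_upwards [Lp.coeFn_zero E₀ 1 (volume.restrict (Set.Icc (0 : ℝ) a_m))] with a ha
      rw [ContinuousLinearMap.zero_apply]
      rw [intervalIntegral.intervalIntegral_eq_integral_uIoc, hzero, smul_zero]
      exact ha
    · have : ⇑(0 : Lp E₀ 1 (volume.restrict (Set.Icc (0 : ℝ) a_m)) →L[ℝ]
          Lp E₀ 1 (volume.restrict (Set.Icc (0 : ℝ) a_m))) = fun _ => 0 := rfl
      rw [this]
      exact isCompactOperator_zero
    · simp only [ContinuousLinearMap.zero_apply]
      rw [Set.range_const, closure_singleton]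
      exact isCompact_singleton
  case pos =>
  set ν : Measure ℝ := volume.restrict (Set.Icc (0 : ℝ) a_m) with hν
  haveI : IsFiniteMeasure ν := by
    constructor
    rw [hν, Measure.restrict_apply_univ, Real.volume_Icc]
    exact ENNReal.ofReal_lt_top
  obtain ⟨hμ0, hμm⟩ := hμ
  -- the (cut-off) kernel
  set Tri : Set (ℝ × ℝ) := {p : ℝ × ℝ | 0 ≤ p.2 ∧ p.2 ≤ p.1 ∧ p.1 ≤ a_m} with hTri
  have hTri_closed : IsClosed Tri := by
    have h1 : Tri = {p : ℝ × ℝ | 0 ≤ p.2} ∩ ({p | p.2 ≤ p.1} ∩ {p | p.1 ≤ a_m}) := rfl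
    rw [h1]
    exact (isClosed_le continuous_const continuous_snd).inter
      ((isClosed_le continuous_snd continuous_fst).inter
        (isClosed_le continuous_fst continuous_const))
  have hTri_meas : MeasurableSet Tri := hTri_closed.measurableSet
  set kk : ℝ × ℝ → E₀ →L[ℝ] E₀ := Tri.indicator (fun p => P (μ + p.1) p.2) with hkk
  have hcontTri : ContinuousOn (fun p : ℝ × ℝ => P (μ + p.1) p.2) Tri := by
    have hg : Continuous fun p : ℝ × ℝ => (μ + p.1, p.2) :=
      (continuous_const.add continuous_fst).prodMk continuous_snd
    refine hE2.comp hg.continuousOn ?_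
    rintro ⟨a, σ⟩ ⟨h1, h2, h3⟩
    exact ⟨h1, by dsimp at *; linarith, by dsimp at *; linarith⟩
  have hk_aesm : AEStronglyMeasurable kk (ν.prod ν) :=
    (aestronglyMeasurable_indicator_iff hTri_meas).2 (hcontTri.aestronglyMeasurable hTri_meas)
  have hkB : ∀ p, ‖kk p‖ ≤ M := by
    intro p
    by_cases hp : p ∈ Tri
    · rw [hkk, Set.indicator_of_mem hp]
      obtain ⟨h1, h2, h3⟩ := hp
      exact hE4a p.2 (μ + p.1) h1 (by linarith) (by linarith)
    · rw [hkk, Set.indicator_of_notMem hp]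
      simp only [norm_zero]
      linarith
  obtain ⟨V, hV⟩ := exists_kernelOp (ν := ν) kk hk_aesm M (by linarith) hkB
  -- the key approximation step
  have key : ∀ ε : ℝ, 0 < ε → ∃ W : Lp E₀ 1 ν →L[ℝ] Lp E₀ 1 ν,
      IsCompactOperator ⇑W ∧ ‖V - W‖ ≤ ε := by
    intro ε hε
    -- uniform continuity of the evolution family on a compact set avoiding the diagonal
    set S : Set (ℝ × ℝ) := (Set.Icc μ (2 * a_m) ×ˢ Set.Icc (0 : ℝ) a_m) ∩
      {p : ℝ × ℝ | p.2 + μ ≤ p.1} with hS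
    have hScpt : IsCompact S :=
      (isCompact_Icc.prod isCompact_Icc).inter_right
        (isClosed_le (continuous_snd.add continuous_const) continuous_fst)
    have hSsub : S ⊆ {p : ℝ × ℝ | 0 ≤ p.2 ∧ p.2 < p.1 ∧ p.1 ≤ 2 * a_m} := by
      rintro ⟨a, σ⟩ ⟨⟨ha, hσ⟩, hle⟩
      simp only [Set.mem_Icc, Set.mem_setOf_eq] at *
      exact ⟨hσ.1, by linarith, ha.2⟩
    have hucont : UniformContinuousOn (fun p : ℝ × ℝ => P p.1 p.2) S :=
      hScpt.uniformContinuousOn_of_continuous (hE2.mono hSsub)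
    set ε₁ : ℝ := ε / (2 * a_m) with hε₁
    have hε₁pos : 0 < ε₁ := by positivity
    rw [Metric.uniformContinuousOn_iff] at hucont
    obtain ⟨δ, hδpos, hδ⟩ := hucont ε₁ hε₁pos
    -- choose the mesh size
    obtain ⟨n, hn⟩ := exists_nat_gt (max (max (a_m / δ) (2 * M * a_m / ε)) 1)
    have hn1 : (1 : ℝ) < n := lt_of_le_of_lt (le_max_right _ _) hn
    have hnpos : (0 : ℝ) < n := by linarith
    have hmesh : a_m / n < δ := by
      rw [div_lt_iff₀ hnpos]
      have h1 : a_m / δ < n :=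
        lt_of_le_of_lt (le_trans (le_max_left _ _) (le_max_left _ _)) hn
      rw [div_lt_iff₀ hδpos] at h1
      linarith
    have hmesh2 : M * (a_m / n) ≤ ε / 2 := by
      have h1 : 2 * M * a_m / ε < n :=
        lt_of_le_of_lt (le_trans (le_max_right _ _) (le_max_left _ _)) hn
      rw [div_lt_iff₀ hε] at h1
      have h2 : M * (a_m / n) = M * a_m / n := by ring
      rw [h2, div_le_iff₀ hnpos]
      nlinarith
    -- the grid
    set t : ℕ → ℝ := fun j => a_m * j / n with htdef
    have ht0 : t 0 = 0 := by simp [htdef]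
    have htn : t n = a_m := by
      simp only [htdef]
      exact mul_div_cancel_right₀ a_m hnpos.ne'
    have htmono : ∀ {i j : ℕ}, i ≤ j → t i ≤ t j := by
      intro i j hij
      have h1 : (i : ℝ) ≤ (j : ℝ) := by exact_mod_cast hij
      have h2 : a_m * (i : ℝ) ≤ a_m * (j : ℝ) := by nlinarith
      simp only [htdef]
      exact (div_le_div_iff_of_pos_right hnpos).2 h2
    have htstep : ∀ j : ℕ, t (j + 1) - t j = a_m / n := by
      intro j
      simp only [htdef]
      push_cast
      field_simp
      ring
    have htnonneg : ∀ j, 0 ≤ t j := fun j => by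
      simp only [htdef]; positivity
    set A : ℕ → Set ℝ := fun j => Set.Ioc (t j) (t (j + 1)) with hA
    have hAsub : ∀ j, j < n → A j ⊆ Set.Icc (0 : ℝ) a_m := by
      intro j hj x hx
      exact ⟨le_trans (htnonneg j) hx.1.le,
        le_trans hx.2 (htn ▸ htmono (Nat.succ_le_of_lt hj))⟩
    have hcell : ∀ σ : ℝ, 0 < σ → σ ≤ a_m → ∃ i, i < n ∧ σ ∈ A i := by
      intro σ hσ0 hσm
      have haux : ∀ m : ℕ, σ ≤ t m → ∃ i, i < m ∧ σ ∈ A i := by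
        intro m
        induction m with
        | zero => intro h; rw [ht0] at h; linarith
        | succ m ih =>
          intro h
          by_cases hc : σ ≤ t m
          · obtain ⟨i, hi, hmem⟩ := ih hc
            exact ⟨i, Nat.lt_succ_of_lt hi, hmem⟩
          · exact ⟨m, Nat.lt_succ_self m, ⟨lt_of_not_ge hc, h⟩⟩
      exact haux n (htn ▸ hσm)
    have hcell_ne : ∀ {σ : ℝ} {i i₀ : ℕ}, σ ∈ A i₀ → i ≠ i₀ → σ ∉ A i := by
      intro σ i i₀ hmem hne hc
      rcases lt_or_gt_of_ne hne with hlt | hgt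
      · have h1 : t (i + 1) ≤ t i₀ := htmono (Nat.succ_le_of_lt hlt)
        exact absurd hc.2 (not_le.2 (lt_of_le_of_lt h1 hmem.1))
      · have h1 : t (i₀ + 1) ≤ t i := htmono (Nat.succ_le_of_lt hgt)
        exact absurd hc.1 (not_lt.2 (le_trans hmem.2 h1))
    -- the approximating finite-rank operator
    set Pc : ℕ → ℕ → (E₀ →L[ℝ] E₀) := fun j i => P (μ + t (j + 1)) (t i) with hPcdef
    choose avg havg using fun i : ℕ => exists_avgCLM (E₀ := E₀) (ν := ν) (A i)
    choose emb hemb using fun j : ℕ =>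
      exists_embCLM (E₀ := E₀) (ν := ν) (A j) measurableSet_Ioc
    set W : Lp E₀ 1 ν →L[ℝ] Lp E₀ 1 ν :=
      ∑ j ∈ Finset.range n, ∑ i ∈ Finset.range j,
        (emb j).comp ((Pc j i).comp (avg i)) with hW
    have hWcpt : IsCompactOperator ⇑W := by
      apply isCompactOperator_finset_sum
      intro j hj
      apply isCompactOperator_finset_sum
      intro i hi
      rw [Finset.mem_range] at hj hi
      have hPcc : IsCompactOperator ⇑(Pc j i) := by
        have hlt : t i < μ + t (j + 1) := by
          have := htmono (Nat.le_succ_of_le hi.le)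
          linarith
        have h2am : μ + t (j + 1) ≤ 2 * a_m := by
          have h1 : t (j + 1) ≤ a_m := htn ▸ htmono (Nat.succ_le_of_lt hj)
          linarith
        have heq := hE3 (t i) (μ + t (j + 1)) (htnonneg i) hlt h2am
        rw [hPcdef]
        simp only
        rw [← heq, ContinuousLinearMap.coe_comp']
        exact hι_cpt.comp_clm (Pθ (μ + t (j + 1)) (t i))
      rw [ContinuousLinearMap.coe_comp', ContinuousLinearMap.coe_comp']
      exact (hPcc.comp_clm (avg i)).clm_comp (emb j)
    refine ⟨W, hWcpt, ?_⟩
    refine ContinuousLinearMap.opNorm_le_bound _ hε.le fun φ => ?_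
    -- notation for the representative of φ
    have hfi : Integrable (φ : ℝ → E₀) ν := L1.integrable_coeFn φ
    have hIφ : ∫ σ, ‖(φ : ℝ → E₀) σ‖ ∂ν = ‖φ‖ := (L1.norm_eq_integral_norm φ).symm
    -- a.e. representation of W φ
    have hψ : ∀ j i : ℕ, ((emb j).comp ((Pc j i).comp (avg i))) φ
        = emb j (Pc j i (avg i φ)) := fun j i => rfl
    have hWφ : (W φ : ℝ → E₀) =ᵐ[ν] fun a => ∑ j ∈ Finset.range n,
        ∑ i ∈ Finset.range j,
          (A j).indicator (fun _ => Pc j i (avg i φ)) a := by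
      have h1 : W φ = ∑ j ∈ Finset.range n, ∑ i ∈ Finset.range j,
          ((emb j).comp ((Pc j i).comp (avg i))) φ := by
        rw [hW]
        simp [ContinuousLinearMap.sum_apply]
      rw [h1]
      refine (Lp_coeFn_sum (Finset.range n) _).trans ?_
      have h2 : ∀ᵐ a ∂ν, ∀ j : ℕ,
          ((∑ i ∈ Finset.range j, ((emb j).comp ((Pc j i).comp (avg i))) φ :
            Lp E₀ 1 ν) : ℝ → E₀) a
          = ∑ i ∈ Finset.range j, (A j).indicator (fun _ => Pc j i (avg i φ)) a := by
        rw [ae_all_iff]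
        intro j
        have h3 : ∀ᵐ a ∂ν, ∀ i : ℕ,
            ((((emb j).comp ((Pc j i).comp (avg i))) φ : Lp E₀ 1 ν) : ℝ → E₀) a
            = (A j).indicator (fun _ => Pc j i (avg i φ)) a := by
          rw [ae_all_iff]
          intro i
          rw [hψ j i]
          exact hemb j (Pc j i (avg i φ))
        filter_upwards [Lp_coeFn_sum (Finset.range j)
          (fun i => ((emb j).comp ((Pc j i).comp (avg i))) φ), h3] with a ha1 ha2
        rw [ha1]
        exact Finset.sum_congr rfl fun i _ => ha2 i
      filter_upwards [h2] with a ha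
      exact Finset.sum_congr rfl fun j _ => ha j
    -- slice integrability of the kernel
    have hka_ae := (kernel_apply_integrable hk_aesm hkB hfi).prod_right_ae
    -- a.e. points avoid 0
    have hσ0ae : ∀ᵐ σ ∂ν, σ ≠ (0 : ℝ) := by
      refine ae_restrict_of_ae ?_
      rw [ae_iff]
      have hset : {σ : ℝ | ¬σ ≠ 0} = {0} := by ext x; simp
      rw [hset]
      exact Real.volume_singleton
    -- the central pointwise estimate on each cell
    have hEst : ∀ j, j < n → ∀ᵐ a ∂ν, a ∈ A j →
        ‖(V φ : ℝ → E₀) a - (W φ : ℝ → E₀) a‖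
          ≤ ε₁ * ‖φ‖ + M * ∫ σ in A j, ‖(φ : ℝ → E₀) σ‖ ∂ν := by
      intro j hjn
      filter_upwards [hV φ, hWφ, hka_ae] with a hVa hWa hka haj
      have haM : a ≤ a_m := le_trans haj.2 (htn ▸ htmono (Nat.succ_le_of_lt hjn))
      have ha0 : 0 ≤ a := le_trans (htnonneg j) haj.1.le
      -- value of W φ at a
      have hWval : (W φ : ℝ → E₀) a = ∑ i ∈ Finset.range j, Pc j i (avg i φ) := by
        rw [hWa, Finset.sum_eq_single j]
        · exact Finset.sum_congr rfl fun i _ => Set.indicator_of_mem haj _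
        · intro j' _ hne
          exact Finset.sum_eq_zero fun i _ =>
            Set.indicator_of_notMem (hcell_ne haj hne) _
        · intro hj'; exact absurd (Finset.mem_range.2 hjn) hj'
      set q : ℝ → E₀ := fun σ => ∑ i ∈ Finset.range j,
        (A i).indicator (fun σ' => Pc j i ((φ : ℝ → E₀) σ')) σ with hq
      have hqi : ∀ i : ℕ, Integrable
          ((A i).indicator (fun σ' => Pc j i ((φ : ℝ → E₀) σ'))) ν := fun i =>
        (ContinuousLinearMap.integrable_comp (Pc j i) hfi).indicator measurableSet_Ioc
      have hq_int : Integrable q ν := integrable_finset_sum _ fun i _ => hqi i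
      have hWint : (W φ : ℝ → E₀) a = ∫ σ, q σ ∂ν := by
        rw [hWval, hq, integral_finset_sum _ fun i _ => hqi i]
        refine Finset.sum_congr rfl fun i _ => ?_
        rw [havg i φ, ← integral_indicator measurableSet_Ioc,
          ← ContinuousLinearMap.integral_comp_comm (Pc j i)
            (hfi.indicator measurableSet_Ioc)]
        refine integral_congr_ae (Eventually.of_forall fun σ => ?_)
        by_cases hσ : σ ∈ A i
        · exact (congrArg (Pc j i) (Set.indicator_of_mem hσ (φ : ℝ → E₀))).trans
            (Set.indicator_of_mem hσ (fun σ' => Pc j i ((φ : ℝ → E₀) σ'))).symm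
        · exact ((congrArg (Pc j i) (Set.indicator_of_notMem hσ (φ : ℝ → E₀))).trans
            (map_zero _)).trans (Set.indicator_of_notMem hσ _).symm
      rw [hVa, hWint, ← integral_sub hka hq_int]
      have hdom : Integrable (fun σ => ε₁ * ‖(φ : ℝ → E₀) σ‖
          + M * (A j).indicator (fun σ' => ‖(φ : ℝ → E₀) σ'‖) σ) ν :=
        (hfi.norm.const_mul ε₁).add
          ((hfi.norm.indicator measurableSet_Ioc).const_mul M)
      have hptwise : ∀ᵐ σ ∂ν, ‖kk (a, σ) ((φ : ℝ → E₀) σ) - q σ‖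
          ≤ ε₁ * ‖(φ : ℝ → E₀) σ‖
            + M * (A j).indicator (fun σ' => ‖(φ : ℝ → E₀) σ'‖) σ := by
        filter_upwards [ae_restrict_mem measurableSet_Icc, hσ0ae] with σ hσI hσ0
        have hind_nonneg : 0 ≤ (A j).indicator (fun σ' => ‖(φ : ℝ → E₀) σ'‖) σ :=
          Set.indicator_nonneg (fun _ _ => norm_nonneg _) σ
        obtain ⟨i₀, hi₀n, hi₀⟩ := hcell σ (lt_of_le_of_ne hσI.1 (Ne.symm hσ0)) hσI.2
        by_cases hij : i₀ < j
        · -- good cell : uniform continuity applies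
          have hqv : q σ = Pc j i₀ ((φ : ℝ → E₀) σ) := by
            rw [hq]
            simp only
            rw [Finset.sum_eq_single i₀]
            · rw [Set.indicator_of_mem hi₀]
            · intro i _ hne
              exact Set.indicator_of_notMem (hcell_ne hi₀ hne) _
            · intro h; exact absurd (Finset.mem_range.2 hij) h
          have hσa : σ ≤ a :=
            le_trans hi₀.2 (le_trans (htmono (Nat.succ_le_of_lt hij)) haj.1.le)
          have hmemT : ((a, σ) : ℝ × ℝ) ∈ Tri := ⟨hσI.1, hσa, haM⟩
          have hkkv : kk (a, σ) = P (μ + a) σ := Set.indicator_of_mem hmemT _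
          rw [hqv, hkkv, ← ContinuousLinearMap.sub_apply]
          have hti₀m : t i₀ ≤ a_m := htn ▸ htmono hi₀n.le
          have htj1m : t (j + 1) ≤ a_m := htn ▸ htmono (Nat.succ_le_of_lt hjn)
          have hp1 : ((μ + a, σ) : ℝ × ℝ) ∈ S := by
            rw [hS]
            exact ⟨⟨Set.mem_Icc.2 ⟨show μ ≤ μ + a by linarith,
              show μ + a ≤ 2 * a_m by linarith⟩,
              Set.mem_Icc.2 ⟨hσI.1, hσI.2⟩⟩, show σ + μ ≤ μ + a by linarith⟩
          have hp2 : ((μ + t (j + 1), t i₀) : ℝ × ℝ) ∈ S := by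
            rw [hS]
            have hti₀j1 : t i₀ ≤ t (j + 1) := htmono (by omega)
            exact ⟨⟨Set.mem_Icc.2 ⟨show μ ≤ μ + t (j + 1) by linarith [htnonneg (j + 1)],
              show μ + t (j + 1) ≤ 2 * a_m by linarith⟩,
              Set.mem_Icc.2 ⟨htnonneg i₀, hti₀m⟩⟩,
              show t i₀ + μ ≤ μ + t (j + 1) by linarith⟩
          have hdist : dist ((μ + a, σ) : ℝ × ℝ) ((μ + t (j + 1), t i₀) : ℝ × ℝ) < δ := by
            rw [Prod.dist_eq]
            have hd1 : dist (μ + a) (μ + t (j + 1)) < δ := by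
              rw [Real.dist_eq, abs_lt]
              have := htstep j
              constructor <;> linarith [haj.1, haj.2, hmesh]
            have hd2 : dist σ (t i₀) < δ := by
              rw [Real.dist_eq, abs_lt]
              have := htstep i₀
              constructor <;> linarith [hi₀.1, hi₀.2, hmesh]
            exact max_lt hd1 hd2
          have hd := hδ _ hp1 _ hp2 hdist
          simp only [dist_eq_norm] at hd
          have hnormle : ‖P (μ + a) σ - Pc j i₀‖ ≤ ε₁ := le_of_lt hd
          calc ‖(P (μ + a) σ - Pc j i₀) ((φ : ℝ → E₀) σ)‖
              ≤ ‖P (μ + a) σ - Pc j i₀‖ * ‖(φ : ℝ → E₀) σ‖ :=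
                ContinuousLinearMap.le_opNorm _ _
            _ ≤ ε₁ * ‖(φ : ℝ → E₀) σ‖ :=
                mul_le_mul_of_nonneg_right hnormle (norm_nonneg _)
            _ ≤ _ := le_add_of_nonneg_right (by positivity)
        · -- diagonal / dead cell
          have hqv : q σ = 0 := by
            rw [hq]
            refine Finset.sum_eq_zero fun i hi => ?_
            have hne : i ≠ i₀ := by
              rw [Finset.mem_range] at hi
              omega
            exact Set.indicator_of_notMem (hcell_ne hi₀ hne) _
          rw [hqv, sub_zero]
          by_cases hσa : σ ≤ a
          · have hσAj : σ ∈ A j :=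
              ⟨lt_of_le_of_lt (htmono (not_lt.1 hij)) hi₀.1, le_trans hσa haj.2⟩
            have h1 : ‖kk (a, σ) ((φ : ℝ → E₀) σ)‖ ≤ M * ‖(φ : ℝ → E₀) σ‖ :=
              le_trans (ContinuousLinearMap.le_opNorm _ _)
                (mul_le_mul_of_nonneg_right (hkB _) (norm_nonneg _))
            have h2 : (A j).indicator (fun σ' => ‖(φ : ℝ → E₀) σ'‖) σ
                = ‖(φ : ℝ → E₀) σ‖ := Set.indicator_of_mem hσAj _
            rw [h2]
            have h3 : 0 ≤ ε₁ * ‖(φ : ℝ → E₀) σ‖ := by positivity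
            linarith
          · have hnot : (a, σ) ∉ Tri := fun hc => hσa hc.2.1
            have h1 : kk (a, σ) = 0 := Set.indicator_of_notMem hnot _
            rw [h1]
            simp only [ContinuousLinearMap.zero_apply, norm_zero]
            positivity
      calc ‖∫ σ, (kk (a, σ) ((φ : ℝ → E₀) σ) - q σ) ∂ν‖
          ≤ ∫ σ, (ε₁ * ‖(φ : ℝ → E₀) σ‖
              + M * (A j).indicator (fun σ' => ‖(φ : ℝ → E₀) σ'‖) σ) ∂ν :=
            norm_integral_le_of_norm_le hdom hptwise
        _ = ε₁ * ‖φ‖ + M * ∫ σ in A j, ‖(φ : ℝ → E₀) σ‖ ∂ν := by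
            rw [integral_add (hfi.norm.const_mul ε₁)
              ((hfi.norm.indicator measurableSet_Ioc).const_mul M),
              integral_const_mul, integral_const_mul, hIφ,
              integral_indicator measurableSet_Ioc]
    -- now integrate the estimate over the cells
    have hg_int : Integrable (fun a => ‖(V φ : ℝ → E₀) a - (W φ : ℝ → E₀) a‖) ν :=
      ((L1.integrable_coeFn (V φ)).sub (L1.integrable_coeFn (W φ))).norm
    have hnorm_eq : ‖(V - W) φ‖
        = ∫ a, ‖(V φ : ℝ → E₀) a - (W φ : ℝ → E₀) a‖ ∂ν := by
      rw [ContinuousLinearMap.sub_apply, L1.norm_eq_integral_norm]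
      refine integral_congr_ae ?_
      filter_upwards [Lp.coeFn_sub (V φ) (W φ)] with a ha
      rw [ha, Pi.sub_apply]
    rw [hnorm_eq]
    have hunion : Set.Ioc (0 : ℝ) a_m = ⋃ j ∈ Finset.range n, A j := by
      ext σ
      simp only [Set.mem_iUnion, Finset.mem_range, Set.mem_Ioc, exists_prop]
      constructor
      · rintro ⟨h1, h2⟩
        obtain ⟨i, hi, hmem⟩ := hcell σ h1 h2
        exact ⟨i, hi, hmem⟩
      · rintro ⟨i, hi, hmem⟩
        exact ⟨lt_of_le_of_lt (htnonneg i) hmem.1,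
          le_trans hmem.2 (htn ▸ htmono (Nat.succ_le_of_lt hi))⟩
    have hdisj : Set.Pairwise (↑(Finset.range n) : Set ℕ) (Function.onFun Disjoint A) := by
      intro i _ j _ hne
      refine Set.disjoint_left.2 fun σ hσi hσj => ?_
      exact hcell_ne hσj hne hσi
    have hAmeas : ∀ j ∈ Finset.range n, MeasurableSet (A j) := fun j _ => measurableSet_Ioc
    have hvolAj : ∀ j : ℕ, (volume (A j)).toReal = a_m / n := by
      intro j
      rw [hA]
      simp only
      rw [Real.volume_Ioc, htstep j, ENNReal.toReal_ofReal (by positivity)]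
    -- relate ν-set-integrals with volume-set-integrals
    have hres : ∀ j, j < n → ν.restrict (A j) = volume.restrict (A j) := by
      intro j hj
      rw [hν, Measure.restrict_restrict measurableSet_Ioc,
        Set.inter_eq_self_of_subset_left (hAsub j hj)]
    set g : ℝ → ℝ := fun a => ‖(V φ : ℝ → E₀) a - (W φ : ℝ → E₀) a‖ with hgdef
    have hg_on : ∀ j, j < n → IntegrableOn g (A j) volume := by
      intro j hj
      have : IntegrableOn g (Set.Icc 0 a_m) volume := hg_int
      exact this.mono_set (hAsub j hj)
    have hsplit : ∫ a, g a ∂ν = ∑ j ∈ Finset.range n, ∫ a in A j, g a ∂volume := by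
      have h1 : ∫ a, g a ∂ν = ∫ a in Set.Icc (0 : ℝ) a_m, g a ∂volume := rfl
      rw [h1, integral_Icc_eq_integral_Ioc, hunion]
      exact integral_biUnion_finset _ hAmeas hdisj
        (fun j hj => hg_on j (Finset.mem_range.1 hj))
    have hfi_on : ∀ j, j < n → IntegrableOn (fun σ => ‖(φ : ℝ → E₀) σ‖) (A j) volume := by
      intro j hj
      have : IntegrableOn (fun σ => ‖(φ : ℝ → E₀) σ‖) (Set.Icc 0 a_m) volume := hfi.norm
      exact this.mono_set (hAsub j hj)
    have hpiece : ∀ j ∈ Finset.range n, ∫ a in A j, g a ∂volume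
        ≤ (a_m / n) * (ε₁ * ‖φ‖ + M * ∫ σ in A j, ‖(φ : ℝ → E₀) σ‖ ∂ν) := by
      intro j hj
      rw [Finset.mem_range] at hj
      have hae_j : ∀ᵐ a ∂(volume.restrict (A j)),
          g a ≤ ε₁ * ‖φ‖ + M * ∫ σ in A j, ‖(φ : ℝ → E₀) σ‖ ∂ν := by
        have h1 := ae_restrict_of_ae_restrict_of_subset (hAsub j hj) (hEst j hj)
        filter_upwards [h1, ae_restrict_mem measurableSet_Ioc] with a h2 h3
        exact h2 h3
      calc ∫ a in A j, g a ∂volume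
          ≤ ∫ _ in A j, (ε₁ * ‖φ‖ + M * ∫ σ in A j, ‖(φ : ℝ → E₀) σ‖ ∂ν) ∂volume :=
            integral_mono_ae (hg_on j hj) (integrable_const _) hae_j
        _ = (a_m / n) * (ε₁ * ‖φ‖ + M * ∫ σ in A j, ‖(φ : ℝ → E₀) σ‖ ∂ν) := by
            rw [integral_const, smul_eq_mul, Measure.real, Measure.restrict_apply_univ, hvolAj j]
    have hsum_c : ∑ j ∈ Finset.range n, ∫ σ in A j, ‖(φ : ℝ → E₀) σ‖ ∂ν = ‖φ‖ := by
      have h1 : ∀ j ∈ Finset.range n, ∫ σ in A j, ‖(φ : ℝ → E₀) σ‖ ∂ν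
          = ∫ σ in A j, ‖(φ : ℝ → E₀) σ‖ ∂volume := by
        intro j hj
        rw [hres j (Finset.mem_range.1 hj)]
      rw [Finset.sum_congr rfl h1]
      rw [← integral_biUnion_finset _ hAmeas hdisj
        (fun j hj => hfi_on j (Finset.mem_range.1 hj)), ← hunion,
        ← integral_Icc_eq_integral_Ioc]
      exact hIφ
    have hc_nonneg : ∀ j, 0 ≤ ∫ σ in A j, ‖(φ : ℝ → E₀) σ‖ ∂ν := fun j =>
      integral_nonneg fun σ => norm_nonneg _
    calc ∫ a, g a ∂ν = ∑ j ∈ Finset.range n, ∫ a in A j, g a ∂volume := hsplit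
      _ ≤ ∑ j ∈ Finset.range n,
          (a_m / n) * (ε₁ * ‖φ‖ + M * ∫ σ in A j, ‖(φ : ℝ → E₀) σ‖ ∂ν) :=
            Finset.sum_le_sum hpiece
      _ = ∑ j ∈ Finset.range n, ((a_m / n) * (ε₁ * ‖φ‖)
            + (a_m / n) * M * (∫ σ in A j, ‖(φ : ℝ → E₀) σ‖ ∂ν)) :=
            Finset.sum_congr rfl fun j _ => by ring
      _ = n * ((a_m / n) * (ε₁ * ‖φ‖))
          + (a_m / n) * M * ∑ j ∈ Finset.range n, ∫ σ in A j, ‖(φ : ℝ → E₀) σ‖ ∂ν := by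
            rw [Finset.sum_add_distrib, Finset.sum_const, Finset.card_range,
              nsmul_eq_mul, ← Finset.mul_sum]
      _ = a_m * (ε₁ * ‖φ‖) + M * (a_m / n) * ‖φ‖ := by
            rw [hsum_c]
            have hn0 : (n : ℝ) ≠ 0 := ne_of_gt hnpos
            have hna : (n : ℝ) * (a_m / n) = a_m := by field_simp
            rw [show (n : ℝ) * ((a_m / n) * (ε₁ * ‖φ‖))
              = ((n : ℝ) * (a_m / n)) * (ε₁ * ‖φ‖) from by ring, hna]
            ring
      _ ≤ (ε / 2) * ‖φ‖ + (ε / 2) * ‖φ‖ := by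
            have h1 : a_m * ε₁ = ε / 2 := by
              rw [hε₁]
              field_simp
            have h2 : a_m * (ε₁ * ‖φ‖) = a_m * ε₁ * ‖φ‖ := by ring
            have h3 : M * (a_m / n) * ‖φ‖ ≤ ε / 2 * ‖φ‖ :=
              mul_le_mul_of_nonneg_right hmesh2 (norm_nonneg _)
            rw [h2, h1]
            linarith
      _ = ε * ‖φ‖ := by ring
  have hVcpt : IsCompactOperator
      (⇑V : Lp E₀ 1 ν → Lp E₀ 1 ν) := by
    have hseq : ∀ k : ℕ, ∃ W : Lp E₀ 1 ν →L[ℝ] Lp E₀ 1 ν,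
        IsCompactOperator ⇑W ∧ ‖V - W‖ ≤ 1 / (k + 1) := fun k =>
      key (1 / (k + 1)) (by positivity)
    choose Wseq hWc hWn using hseq
    have htend : Tendsto Wseq atTop (𝓝 V) := by
      rw [tendsto_iff_norm_sub_tendsto_zero]
      have hb : ∀ k : ℕ, ‖Wseq k - V‖ ≤ 1 / (k + 1) := fun k => by
        rw [norm_sub_rev]; exact hWn k
      exact squeeze_zero (fun k => norm_nonneg _) hb
        tendsto_one_div_add_atTop_nhds_zero_nat
    exact isCompactOperator_of_tendsto htend (Eventually.of_forall hWc)
  refine ⟨V, ?_, ?_, ?_⟩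
  · intro φ
    filter_upwards [hV φ, ae_restrict_mem measurableSet_Icc] with a hVa ha
    rw [hVa]
    have hrw : (fun σ => kk (a, σ) ((φ : ℝ → E₀) σ))
        = (Set.Icc (0 : ℝ) a).indicator (fun σ => P (μ + a) σ ((φ : ℝ → E₀) σ)) := by
      funext σ
      by_cases hσ : σ ∈ Set.Icc (0 : ℝ) a
      · have hmem : (a, σ) ∈ Tri := ⟨hσ.1, hσ.2, ha.2⟩
        rw [Set.indicator_of_mem hσ, hkk, Set.indicator_of_mem hmem]
      · have hmem : (a, σ) ∉ Tri := by
          intro hc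
          exact hσ ⟨hc.1, hc.2.1⟩
        rw [Set.indicator_of_notMem hσ, hkk, Set.indicator_of_notMem hmem]
        rfl
    rw [hrw, integral_indicator measurableSet_Icc]
    have hres : ν.restrict (Set.Icc (0 : ℝ) a) = volume.restrict (Set.Icc (0 : ℝ) a) := by
      rw [hν, Measure.restrict_restrict measurableSet_Icc,
        Set.inter_eq_self_of_subset_left (Set.Icc_subset_Icc le_rfl ha.2)]
    rw [hres]
    rw [intervalIntegral.integral_of_le ha.1]
    exact integral_Icc_eq_integral_Ioc
  · exact hVcpt
  · intro φs C hC
    have hbdd : Bornology.IsBounded (Set.range φs) := by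
      rw [isBounded_iff_forall_norm_le]
      exact ⟨C, by rintro x ⟨j, rfl⟩; exact hC j⟩
    have h1 : IsCompact (closure (⇑V '' Set.range φs)) :=
      IsCompactOperator.isCompact_closure_image_of_bounded
        (𝕜₁ := ℝ) (f := (V : Lp E₀ 1 ν →ₗ[ℝ] Lp E₀ 1 ν)) hVcpt hbdd
    have h2 : (Set.range fun j => V (φs j)) = ⇑V '' Set.range φs := by
      rw [← Set.range_comp]; rfl
    rw [h2]
    exact h1
end

section
/- Let F : J → L(E₀) be a family of bounded linear operators with ‖F(a)‖_{L(E₀)} ≤ M for all a ∈ J, and suppose there are constants c > 0 and ϑ ∈ (0,1) with the Hölder estimate ‖(F(a+h) − F(a)) ∘ ι‖_{L(Eϑ,E₀)} ≤ c h^ϑ whenever 0 ≤ a ≤ a+h ≤ a_m. Then for every bounded sequence (x_j) in Eϑ, the sequence of continuous functions f_j : J → E₀, f_j(a) := F(a)(ι(x_j)), has a subsequence converging uniformly on J; that is, {f_j : j ∈ ℕ} is relatively compact in C(J,E₀). -/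
open MeasureTheory Set Filter Topology

lemma holder_pointwise_aux
    {E₀ Eϑ : Type*} [NormedAddCommGroup E₀] [NormedSpace ℝ E₀]
    [NormedAddCommGroup Eϑ] [NormedSpace ℝ Eϑ]
    (ι : Eϑ →L[ℝ] E₀) (a_m : ℝ)
    (F : ℝ → E₀ →L[ℝ] E₀)
    (c ϑ : ℝ)
    (hHolder : ∀ a h : ℝ, 0 ≤ a → 0 ≤ h → a + h ≤ a_m →
      ‖(F (a + h) - F a).comp ι‖ ≤ c * h ^ ϑ)
    (z : Eϑ) {a b : ℝ} (ha : a ∈ Set.Icc (0:ℝ) a_m) (hb : b ∈ Set.Icc (0:ℝ) a_m) :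
    ‖F b (ι z) - F a (ι z)‖ ≤ c * |b - a| ^ ϑ * ‖z‖ := by
  rcases le_total a b with hab | hab
  · have h1 := hHolder a (b - a) ha.1 (by linarith) (by linarith [hb.2])
    have h2 : a + (b - a) = b := by ring
    rw [h2] at h1
    have h3 : ((F b - F a).comp ι) z = F b (ι z) - F a (ι z) := rfl
    calc ‖F b (ι z) - F a (ι z)‖ = ‖((F b - F a).comp ι) z‖ := by rw [h3]
      _ ≤ ‖(F b - F a).comp ι‖ * ‖z‖ := (F b - F a).comp ι |>.le_opNorm z
      _ ≤ c * (b - a) ^ ϑ * ‖z‖ := by gcongr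
      _ = c * |b - a| ^ ϑ * ‖z‖ := by rw [abs_of_nonneg (by linarith)]
  · have h1 := hHolder b (a - b) hb.1 (by linarith) (by linarith [ha.2])
    have h2 : b + (a - b) = a := by ring
    rw [h2] at h1
    have h3 : ((F a - F b).comp ι) z = F a (ι z) - F b (ι z) := rfl
    calc ‖F b (ι z) - F a (ι z)‖ = ‖((F a - F b).comp ι) z‖ := by
          rw [h3, norm_sub_rev]
      _ ≤ ‖(F a - F b).comp ι‖ * ‖z‖ := (F a - F b).comp ι |>.le_opNorm z
      _ ≤ c * (a - b) ^ ϑ * ‖z‖ := by gcongr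
      _ = c * |b - a| ^ ϑ * ‖z‖ := by rw [abs_sub_comm, abs_of_nonneg (by linarith)]

lemma holder_continuousOn_aux
    {E₀ Eϑ : Type*} [NormedAddCommGroup E₀] [NormedSpace ℝ E₀]
    [NormedAddCommGroup Eϑ] [NormedSpace ℝ Eϑ]
    (ι : Eϑ →L[ℝ] E₀) (a_m : ℝ)
    (F : ℝ → E₀ →L[ℝ] E₀)
    (c ϑ : ℝ) (hϑ : 0 < ϑ)
    (hHolder : ∀ a h : ℝ, 0 ≤ a → 0 ≤ h → a + h ≤ a_m →
      ‖(F (a + h) - F a).comp ι‖ ≤ c * h ^ ϑ)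
    (z : Eϑ) :
    ContinuousOn (fun a => F a (ι z)) (Set.Icc (0:ℝ) a_m) := by
  intro a ha
  rw [ContinuousWithinAt, tendsto_iff_norm_sub_tendsto_zero]
  have hbound : Tendsto (fun b => c * |b - a| ^ ϑ * ‖z‖) (𝓝[Set.Icc (0:ℝ) a_m] a) (𝓝 0) := by
    have h0 : Tendsto (fun b : ℝ => |b - a|) (𝓝[Set.Icc (0:ℝ) a_m] a) (𝓝 0) := by
      have h0' : Tendsto (fun b : ℝ => |b - a|) (𝓝[Set.Icc (0:ℝ) a_m] a) (𝓝 |a - a|) :=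
        ((continuous_id.sub continuous_const).abs).continuousWithinAt
      simpa using h0'
    have hrpow : ContinuousAt (fun t : ℝ => t ^ ϑ) 0 :=
      Real.continuousAt_rpow_const 0 ϑ (Or.inr hϑ.le)
    have h1 : Tendsto (fun b : ℝ => |b - a| ^ ϑ) (𝓝[Set.Icc (0:ℝ) a_m] a) (𝓝 (0 ^ ϑ)) :=
      hrpow.tendsto.comp h0
    rw [Real.zero_rpow (ne_of_gt hϑ)] at h1
    have := (h1.const_mul c).mul_const ‖z‖
    simpa using this
  refine squeeze_zero' (Eventually.of_forall fun b => norm_nonneg _) ?_ hbound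
  filter_upwards [self_mem_nhdsWithin] with b hb
  exact holder_pointwise_aux ι a_m F c ϑ hHolder z ha hb

/-- Let `F : J → L(E₀)` with `‖F(a)‖ ≤ M` on `J` and the Hölder estimate
`‖(F(a+h) − F(a)) ∘ ι‖_{L(Eϑ,E₀)} ≤ c h^ϑ` for `0 ≤ a ≤ a+h ≤ a_m`. Then for every
bounded sequence `(x_j)` in `Eϑ`, the sequence of functions `f_j(a) := F(a)(ι(x_j))`
has a subsequence converging uniformly on `J`, i.e. `{f_j}` is relatively compact in
`C(J,E₀)`. -/
theorem holder_family_relatively_compact_in_C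
    {E₀ Eϑ : Type*} [NormedAddCommGroup E₀] [NormedSpace ℝ E₀]
    [NormedAddCommGroup Eϑ] [NormedSpace ℝ Eϑ]
    (ι : Eϑ →L[ℝ] E₀) (hι_inj : Function.Injective ι)
    (hι_cpt : IsCompactOperator (ι : Eϑ →L[ℝ] E₀))
    (a_m : ℝ) (ha_m : 0 < a_m)
    (F : ℝ → E₀ →L[ℝ] E₀) (M : ℝ)
    (hF_bd : ∀ a ∈ Set.Icc (0 : ℝ) a_m, ‖F a‖ ≤ M)
    (c ϑ : ℝ) (hc : 0 < c) (hϑ : ϑ ∈ Set.Ioo (0 : ℝ) 1)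
    (hHolder : ∀ a h : ℝ, 0 ≤ a → 0 ≤ h → a + h ≤ a_m →
      ‖(F (a + h) - F a).comp ι‖ ≤ c * h ^ ϑ)
    (x : ℕ → Eϑ) (C : ℝ) (hx : ∀ j, ‖x j‖ ≤ C) :
    ∃ s : ℕ → ℕ, StrictMono s ∧
      ∃ g : ℝ → E₀, ContinuousOn g (Set.Icc (0 : ℝ) a_m) ∧
        TendstoUniformlyOn (fun k a => F a (ι (x (s k)))) g atTop (Set.Icc (0 : ℝ) a_m) := by
  -- compact set containing the ι (x j)
  have hC0 : (0:ℝ) < C + 1 := by have := (norm_nonneg (x 0)).trans (hx 0); linarith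
  have hK : IsCompact (closure (⇑ι '' Metric.closedBall 0 (C + 1))) :=
    IsCompactOperator.isCompact_closure_image_closedBall (𝕜₁ := ℝ)
      (f := (ι : Eϑ →ₗ[ℝ] E₀)) hι_cpt (C + 1)
  have hmem : ∀ j, ι (x j) ∈ closure (ι '' Metric.closedBall 0 (C + 1)) := by
    intro j
    apply subset_closure
    exact ⟨x j, by simpa using (hx j).trans (by linarith), rfl⟩
  obtain ⟨y, _, s, hs, hconv⟩ := hK.tendsto_subseq hmem
  have hunif : TendstoUniformlyOn (fun k a => F a (ι (x (s k)))) (fun a => F a y)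
      atTop (Set.Icc (0 : ℝ) a_m) := by
    have hM0 : 0 ≤ M := (norm_nonneg (F 0)).trans (hF_bd 0 ⟨le_rfl, le_of_lt ha_m⟩)
    rw [Metric.tendstoUniformlyOn_iff]
    intro ε hε
    have hεM : 0 < ε / (M + 1) := by positivity
    have : ∀ᶠ k in atTop, dist (ι (x (s k))) y < ε / (M + 1) :=
      (Metric.tendsto_nhds.mp hconv) _ hεM
    filter_upwards [this] with k hk a ha
    have : dist (F a y) (F a (ι (x (s k)))) = ‖F a (y - ι (x (s k)))‖ := by
      rw [dist_eq_norm, ← map_sub]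
    rw [this]
    calc ‖F a (y - ι (x (s k)))‖ ≤ ‖F a‖ * ‖y - ι (x (s k))‖ := (F a).le_opNorm _
      _ ≤ M * ‖y - ι (x (s k))‖ := by gcongr; exact hF_bd a ha
      _ ≤ (M + 1) * ‖y - ι (x (s k))‖ :=
          mul_le_mul_of_nonneg_right (by linarith) (norm_nonneg _)
      _ < (M + 1) * (ε / (M + 1)) := by
          have : ‖y - ι (x (s k))‖ < ε / (M + 1) := by
            rwa [← dist_eq_norm, dist_comm]
          exact (mul_lt_mul_iff_right₀ (by linarith)).mpr this
      _ = ε := by field_simp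
  refine ⟨s, hs, fun a => F a y, ?_, hunif⟩
  exact hunif.continuousOn (Eventually.of_forall fun k =>
    holder_continuousOn_aux ι a_m F c ϑ hϑ.1 hHolder (x (s k))).frequently
end
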